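/- arXiv:1706.09156 — 3 statements merged into one kernel-verified Lean document; each statement's English description precedes it below -/
import Mathlib

section
/- SVRG-type instance of the P-L bound (consequence of Theorem 3 noted in the text). Suppose each ∇f_i is L-Lipschitz (Assumption A1) and f satisfies the P-L condition with constant μ > 0. Run SCSG with B_j ≡ n, b_j ≡ 1 and η_j L = γ n^{−2/3} for some 0 < γ ≤ 1/3, with n ≥ 8. Then E( f(x̃_T) − f* ) ≤ ( 5L / ( μ γ n^{1/3} + 5L ) )^T · Δ_f. -/
open scoped BigOperators ENNReal

noncomputable section

namespace SCSG

/-- The ambient Euclidean space. -/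
abbrev Vec (d : ℕ) := EuclideanSpace ℝ (Fin d)

/-- The finite-sum objective `f(x) = (1/n) ∑ f_i(x)`. -/
def avg (n d : ℕ) (f : Fin n → Vec d → ℝ) : Vec d → ℝ :=
  fun x => (∑ i, f i x) / n

/-- Batch gradient `∇f_I(x) = |I|⁻¹ ∑_{i∈I} ∇f_i(x)`. -/
def gradBatch {n d : ℕ} (f : Fin n → Vec d → ℝ) (I : Finset (Fin n)) (x : Vec d) : Vec d :=
  (I.card : ℝ)⁻¹ • ∑ i ∈ I, gradient (f i) x

/-- Uniform distribution over size-`m` subsets of `{1,…,n}`. -/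
def unifSubsets (n m : ℕ) : PMF (Finset (Fin n)) :=
  if h : (Finset.powersetCard m (Finset.univ : Finset (Fin n))).Nonempty then
    PMF.uniformOfFinset _ h
  else PMF.pure ∅

/-- Geometric distribution on `{0,1,2,…}` with `P(N = k) = γ^k (1-γ)`. -/
def geom (γ : ℝ) : PMF ℕ :=
  if h : 0 < 1 - γ ∧ 1 - γ ≤ 1 then ProbabilityTheory.geometricPMF h.1 h.2
  else PMF.pure 0

/-- Expectation of a real function under a `PMF`. -/
def pexp {α : Type*} (p : PMF α) (g : α → ℝ) : ℝ := ∑' a, (p a).toReal * g a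

variable {n d : ℕ}

/-- One inner SVRG-type update of SCSG. -/
def innerStep (f : Fin n → Vec d → ℝ) (x0 g : Vec d) (η : ℝ) (b : ℕ) (x : Vec d) :
    PMF (Vec d) :=
  (unifSubsets n b).map fun J => x - η • (gradBatch f J x - gradBatch f J x0 + g)

/-- `k` inner SVRG-type updates of SCSG started at `x`. -/
def innerIter (f : Fin n → Vec d → ℝ) (x0 g : Vec d) (η : ℝ) (b : ℕ) :
    ℕ → Vec d → PMF (Vec d)
  | 0, x => PMF.pure x
  | k + 1, x => (innerStep f x0 g η b x).bind (innerIter f x0 g η b k)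

/-- One epoch of SCSG started at `xp`, returning the batch `I_j` together with `x̃_j`. -/
def epochFull (f : Fin n → Vec d → ℝ) (η : ℝ) (B b : ℕ) (xp : Vec d) :
    PMF (Finset (Fin n) × Vec d) :=
  (unifSubsets n B).bind fun I =>
    ((geom ((B : ℝ) / (B + b))).bind fun N =>
      innerIter f xp (gradBatch f I xp) η b N xp).map fun y => (I, y)

/-- One epoch of SCSG, returning `x̃_j`. -/
def epoch (f : Fin n → Vec d → ℝ) (η : ℝ) (B b : ℕ) (xp : Vec d) : PMF (Vec d) :=
  (epochFull f η B b xp).map Prod.snd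

/-- Law of `x̃_j` (the iterate after `j` epochs), for stepsizes `η`, batch sizes `B`,
mini-batch sizes `b` (epoch `j` uses `η j`, `B j`, `b j`). -/
def marg (f : Fin n → Vec d → ℝ) (η : ℕ → ℝ) (B b : ℕ → ℕ) (x0 : Vec d) :
    ℕ → PMF (Vec d)
  | 0 => PMF.pure x0
  | j + 1 => (marg f η B b x0 j).bind (epoch f (η (j + 1)) (B (j + 1)) (b (j + 1)))

/-- Joint law of `(x̃_j, x̃_{j+1})`. -/
def pairPMF (f : Fin n → Vec d → ℝ) (η : ℕ → ℝ) (B b : ℕ → ℕ) (x0 : Vec d) (j : ℕ) :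
    PMF (Vec d × Vec d) :=
  (marg f η B b x0 j).bind fun x =>
    (epoch f (η (j + 1)) (B (j + 1)) (b (j + 1)) x).map fun y => (x, y)

/-- Joint law of `(x̃_j, I_{j+1}, x̃_{j+1})`. -/
def triplePMF (f : Fin n → Vec d → ℝ) (η : ℕ → ℝ) (B b : ℕ → ℕ) (x0 : Vec d) (j : ℕ) :
    PMF (Vec d × Finset (Fin n) × Vec d) :=
  (marg f η B b x0 j).bind fun x =>
    (epochFull f (η (j + 1)) (B (j + 1)) (b (j + 1)) x).map fun Iy => (x, Iy)


/-! ### Auxiliary machinery: expectations of finitely-supported PMFs -/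

section PexpMachinery

variable {α : Type*} {β : Type*}

lemma aux_pexp_eq_sum (p : PMF α) (g : α → ℝ) (hp : p.support.Finite) :
    pexp p g = ∑ x ∈ hp.toFinset, (p x).toReal * g x := by
  apply tsum_eq_sum
  intro x hx
  have : p x = 0 := by
    by_contra h
    exact hx (hp.mem_toFinset.2 h)
  simp [this]

lemma aux_pexp_eq_sum_of_subset (p : PMF α) (g : α → ℝ) (hp : p.support.Finite)
    (s : Finset α) (hs : p.support ⊆ ↑s) :
    pexp p g = ∑ x ∈ s, (p x).toReal * g x := by
  rw [aux_pexp_eq_sum p g hp]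
  apply Finset.sum_subset
  · intro x hx
    exact hs (hp.mem_toFinset.1 hx)
  · intro x _ hx
    have : p x = 0 := by
      by_contra h
      exact hx (hp.mem_toFinset.2 h)
    simp [this]

lemma aux_support_bind_finite (p : PMF α) (K : α → PMF β) (hp : p.support.Finite)
    (hK : ∀ x, (K x).support.Finite) : (p.bind K).support.Finite := by
  rw [PMF.support_bind]
  exact Set.Finite.biUnion hp (fun x _ => hK x)

lemma aux_pexp_bind (p : PMF α) (K : α → PMF β) (g : β → ℝ) (hp : p.support.Finite)
    (hK : ∀ x, (K x).support.Finite) :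
    pexp (p.bind K) g = ∑ x ∈ hp.toFinset, (p x).toReal * pexp (K x) g := by
  classical
  have hb : (p.bind K).support.Finite := aux_support_bind_finite p K hp hK
  set T : Finset β := hb.toFinset with hT
  rw [aux_pexp_eq_sum _ g hb]
  have hval : ∀ y, ((p.bind K) y).toReal
      = ∑ x ∈ hp.toFinset, (p x).toReal * ((K x) y).toReal := by
    intro y
    rw [PMF.bind_apply]
    have : ∑' x, p x * (K x) y = ∑ x ∈ hp.toFinset, p x * (K x) y := by
      apply tsum_eq_sum
      intro x hx
      have : p x = 0 := by
        by_contra h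
        exact hx (hp.mem_toFinset.2 h)
      simp [this]
    rw [this, ENNReal.toReal_sum]
    · exact Finset.sum_congr rfl (fun x _ => ENNReal.toReal_mul)
    · intro x _
      exact (ENNReal.mul_lt_top (p.apply_lt_top x) ((K x).apply_lt_top y)).ne
  calc ∑ y ∈ T, ((p.bind K) y).toReal * g y
      = ∑ y ∈ T, ∑ x ∈ hp.toFinset, (p x).toReal * ((K x) y).toReal * g y := by
        apply Finset.sum_congr rfl; intro y _; rw [hval y, Finset.sum_mul]
    _ = ∑ x ∈ hp.toFinset, ∑ y ∈ T, (p x).toReal * (((K x) y).toReal * g y) := by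
        rw [Finset.sum_comm]; apply Finset.sum_congr rfl; intro x _
        apply Finset.sum_congr rfl; intro y _; ring
    _ = ∑ x ∈ hp.toFinset, (p x).toReal * pexp (K x) g := by
        apply Finset.sum_congr rfl; intro x hx
        rw [← Finset.mul_sum]
        congr 1
        rw [aux_pexp_eq_sum_of_subset (K x) g (hK x) T]
        intro y hy
        rw [hT, Set.Finite.coe_toFinset, PMF.support_bind]
        exact Set.mem_biUnion (hp.mem_toFinset.1 hx) hy

lemma aux_pexp_pure (x : α) (g : α → ℝ) : pexp (PMF.pure x) g = g x := by
  rw [pexp, tsum_eq_single x]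
  · simp
  · intro y hy; simp [PMF.pure_apply, hy]

lemma aux_pexp_map (p : PMF α) (h : α → β) (g : β → ℝ) (hp : p.support.Finite) :
    pexp (p.map h) g = pexp p (fun x => g (h x)) := by
  rw [PMF.map, aux_pexp_bind p _ g hp (fun x => (Set.finite_singleton (h x)).subset (by simp))]
  rw [aux_pexp_eq_sum p _ hp]
  exact Finset.sum_congr rfl (fun x _ => by rw [Function.comp_apply, aux_pexp_pure])

lemma aux_pexp_mono (p : PMF α) (g h : α → ℝ) (hp : p.support.Finite)
    (hgh : ∀ x, g x ≤ h x) : pexp p g ≤ pexp p h := by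
  rw [aux_pexp_eq_sum p g hp, aux_pexp_eq_sum p h hp]
  exact Finset.sum_le_sum fun x _ => mul_le_mul_of_nonneg_left (hgh x) ENNReal.toReal_nonneg

lemma aux_pexp_linear (p : PMF α) (g h : α → ℝ) (a b : ℝ) (hp : p.support.Finite) :
    pexp p (fun x => a * g x + b * h x) = a * pexp p g + b * pexp p h := by
  rw [aux_pexp_eq_sum p _ hp, aux_pexp_eq_sum p g hp, aux_pexp_eq_sum p h hp,
    Finset.mul_sum, Finset.mul_sum, ← Finset.sum_add_distrib]
  exact Finset.sum_congr rfl fun x _ => by ring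

lemma aux_pexp_nonneg (p : PMF α) (g : α → ℝ) (hg : ∀ x, 0 ≤ g x) : 0 ≤ pexp p g :=
  tsum_nonneg (fun x => mul_nonneg ENNReal.toReal_nonneg (hg x))

lemma aux_pexp_uniformOfFinset (s : Finset α) (hs : s.Nonempty) (F : α → ℝ) :
    pexp (PMF.uniformOfFinset s hs) F = (s.card : ℝ)⁻¹ * ∑ a ∈ s, F a := by
  have hfin : (PMF.uniformOfFinset s hs).support.Finite := by
    rw [PMF.support_uniformOfFinset]; exact s.finite_toSet
  rw [aux_pexp_eq_sum _ _ hfin, Finset.mul_sum]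
  have : hfin.toFinset = s := by
    ext a; simp [PMF.support_uniformOfFinset]
  rw [this]
  apply Finset.sum_congr rfl
  intro a ha
  rw [PMF.uniformOfFinset_apply, if_pos ha, ENNReal.toReal_inv]
  simp

/-- `ℝ≥0∞`-valued expectation of `ofReal ∘ g`. -/
def auxPsi {α : Type*} (p : PMF α) (g : α → ℝ) : ℝ≥0∞ := ∑' a, p a * ENNReal.ofReal (g a)

lemma auxPsi_bind (p : PMF α) (K : α → PMF β) (g : β → ℝ) :
    auxPsi (p.bind K) g = ∑' x, p x * auxPsi (K x) g := by
  rw [auxPsi]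
  simp only [PMF.bind_apply]
  calc ∑' (y : β), (∑' (x : α), p x * (K x) y) * ENNReal.ofReal (g y)
      = ∑' (y : β) (x : α), p x * (K x) y * ENNReal.ofReal (g y) := by
        apply tsum_congr; intro y; rw [ENNReal.tsum_mul_right]
    _ = ∑' (x : α) (y : β), p x * (K x) y * ENNReal.ofReal (g y) := ENNReal.tsum_comm
    _ = ∑' (x : α), p x * auxPsi (K x) g := by
        apply tsum_congr; intro x
        rw [auxPsi, ← ENNReal.tsum_mul_left]
        apply tsum_congr; intro y; ring

lemma auxPsi_pure (x : α) (g : α → ℝ) : auxPsi (PMF.pure x) g = ENNReal.ofReal (g x) := by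
  rw [auxPsi, tsum_eq_single x] <;> simp [PMF.pure_apply]
  intro y hy; simp [hy]

lemma auxPsi_eq_ofReal_pexp (p : PMF α) (g : α → ℝ) (hp : p.support.Finite)
    (hg : ∀ x, 0 ≤ g x) : auxPsi p g = ENNReal.ofReal (pexp p g) := by
  have h1 : auxPsi p g = ∑ x ∈ hp.toFinset, p x * ENNReal.ofReal (g x) := by
    apply tsum_eq_sum
    intro x hx
    have : p x = 0 := by by_contra h; exact hx (hp.mem_toFinset.2 h)
    simp [this]
  rw [h1, aux_pexp_eq_sum p g hp, ENNReal.ofReal_sum_of_nonneg]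
  · apply Finset.sum_congr rfl
    intro x _
    rw [ENNReal.ofReal_mul ENNReal.toReal_nonneg, ENNReal.ofReal_toReal (p.apply_lt_top x).ne]
  · intro x _
    exact mul_nonneg ENNReal.toReal_nonneg (hg x)

lemma aux_pexp_le_of_auxPsi (p : PMF α) (g : α → ℝ) (hg : ∀ x, 0 ≤ g x) (C : ℝ) (hC : 0 ≤ C)
    (h : auxPsi p g ≤ ENNReal.ofReal C) : pexp p g ≤ C := by
  by_cases hs : Summable (fun a => (p a).toReal * g a)
  · apply Summable.tsum_le_of_sum_le hs
    intro s
    have h1 : ∑ x ∈ s, (p x).toReal * g x = (∑ x ∈ s, p x * ENNReal.ofReal (g x)).toReal := by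
      rw [ENNReal.toReal_sum
        (fun x _ => (ENNReal.mul_lt_top (p.apply_lt_top x) ENNReal.ofReal_lt_top).ne)]
      apply Finset.sum_congr rfl
      intro x _
      rw [ENNReal.toReal_mul, ENNReal.toReal_ofReal (hg x)]
    rw [h1]
    calc (∑ x ∈ s, p x * ENNReal.ofReal (g x)).toReal
        ≤ (ENNReal.ofReal C).toReal := by
          apply ENNReal.toReal_mono ENNReal.ofReal_ne_top
          exact le_trans (ENNReal.sum_le_tsum s) h
      _ = C := ENNReal.toReal_ofReal hC
  · rw [pexp, tsum_eq_zero_of_not_summable hs]; exact hC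

end PexpMachinery

/-! ### Auxiliary machinery: calculus -/

section CalcMachinery

open scoped RealInnerProductSpace

variable {n d : ℕ}

lemma aux_hasGradientAt_avg (f : Fin n → Vec d → ℝ) (hdiff : ∀ i, Differentiable ℝ (f i))
    (x : Vec d) :
    HasGradientAt (avg n d f) ((n : ℝ)⁻¹ • ∑ i, gradient (f i) x) x := by
  have h1 : ∀ i : Fin n, HasFDerivAt (f i)
      (InnerProductSpace.toDual ℝ (Vec d) (gradient (f i) x)) x :=
    fun i => ((hdiff i x).hasGradientAt).hasFDerivAt
  have h2 : HasFDerivAt (fun y => ∑ i, f i y)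
      (∑ i, InnerProductSpace.toDual ℝ (Vec d) (gradient (f i) x)) x :=
    HasFDerivAt.fun_sum (fun i _ => h1 i)
  have h3 : HasFDerivAt (avg n d f)
      ((n:ℝ)⁻¹ • ∑ i, InnerProductSpace.toDual ℝ (Vec d) (gradient (f i) x)) x := by
    have : avg n d f = fun y => (n:ℝ)⁻¹ * ∑ i, f i y := by
      funext y; rw [avg, div_eq_inv_mul]
    rw [this]
    exact h2.const_mul _
  have h4 := h3.hasGradientAt
  convert h4 using 1
  rw [map_smul, map_sum]
  congr 1
  exact Finset.sum_congr rfl fun i _ => by rw [LinearIsometryEquiv.symm_apply_apply]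

lemma aux_gradient_avg (f : Fin n → Vec d → ℝ) (hdiff : ∀ i, Differentiable ℝ (f i))
    (x : Vec d) :
    gradient (avg n d f) x = (n : ℝ)⁻¹ • ∑ i, gradient (f i) x :=
  (aux_hasGradientAt_avg f hdiff x).gradient

lemma aux_gradBatch_univ (f : Fin n → Vec d → ℝ) (hdiff : ∀ i, Differentiable ℝ (f i))
    (x : Vec d) :
    gradBatch f Finset.univ x = gradient (avg n d f) x := by
  rw [aux_gradient_avg f hdiff x, gradBatch, Finset.card_univ, Fintype.card_fin]

lemma aux_gradBatch_singleton (f : Fin n → Vec d → ℝ) (i : Fin n) (x : Vec d) :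
    gradBatch f {i} x = gradient (f i) x := by
  simp [gradBatch]

lemma aux_smul_gradient_avg (f : Fin n → Vec d → ℝ) (hdiff : ∀ i, Differentiable ℝ (f i))
    (hn : 0 < n) (x : Vec d) :
    (n : ℝ) • gradient (avg n d f) x = ∑ i, gradient (f i) x := by
  rw [aux_gradient_avg f hdiff x, smul_smul, mul_inv_cancel₀ (by positivity), one_smul]

lemma aux_lip_grad_avg (f : Fin n → Vec d → ℝ) (L : ℝ) (hdiff : ∀ i, Differentiable ℝ (f i))
    (hlip : ∀ i (x y : Vec d), ‖gradient (f i) x - gradient (f i) y‖ ≤ L * ‖x - y‖)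
    (hn : 0 < n) (a b : Vec d) :
    ‖gradient (avg n d f) a - gradient (avg n d f) b‖ ≤ L * ‖a - b‖ := by
  rw [aux_gradient_avg f hdiff a, aux_gradient_avg f hdiff b, ← smul_sub, ← Finset.sum_sub_distrib]
  rw [norm_smul]
  calc ‖(n:ℝ)⁻¹‖ * ‖∑ i, (gradient (f i) a - gradient (f i) b)‖
      ≤ ‖(n:ℝ)⁻¹‖ * ∑ i, ‖gradient (f i) a - gradient (f i) b‖ :=
        mul_le_mul_of_nonneg_left (norm_sum_le _ _) (norm_nonneg _)
    _ ≤ ‖(n:ℝ)⁻¹‖ * ∑ _i : Fin n, L * ‖a - b‖ :=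
        mul_le_mul_of_nonneg_left (Finset.sum_le_sum fun i _ => hlip i a b) (norm_nonneg _)
    _ = L * ‖a - b‖ := by
        rw [Finset.sum_const, Finset.card_univ, Fintype.card_fin, nsmul_eq_mul]
        rw [Real.norm_eq_abs, abs_of_pos (by positivity : (0:ℝ) < (n:ℝ)⁻¹)]
        field_simp

lemma aux_hasDerivAt_line (F : Vec d → ℝ) (hF : Differentiable ℝ F) (x u : Vec d) (t : ℝ) :
    HasDerivAt (fun s : ℝ => F (x + s • u)) ⟪gradient F (x + t • u), u⟫ t := by
  have hline : HasDerivAt (fun s : ℝ => x + s • u) u t := by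
    simpa using ((hasDerivAt_id t).smul_const u).const_add x
  have hF' : HasFDerivAt F
      (InnerProductSpace.toDual ℝ (Vec d) (gradient F (x + t • u))) (x + t • u) :=
    ((hF (x + t • u)).hasGradientAt).hasFDerivAt
  have := hF'.comp_hasDerivAt t hline
  exact this

/-- Descent lemma for a function with `L`-Lipschitz gradient. -/
lemma aux_descent (F : Vec d → ℝ) (L : ℝ) (hF : Differentiable ℝ F)
    (hlip : ∀ a b : Vec d, ‖gradient F a - gradient F b‖ ≤ L * ‖a - b‖)
    (x u : Vec d) :
    F (x + u) ≤ F x + ⟪gradient F x, u⟫ + L / 2 * ‖u‖ ^ 2 := by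
  set g : ℝ → ℝ := fun t => F (x + t • u) - t * ⟪gradient F x, u⟫ - L / 2 * t ^ 2 * ‖u‖ ^ 2
    with hg
  have hderiv : ∀ t : ℝ, HasDerivAt g
      (⟪gradient F (x + t • u), u⟫ - ⟪gradient F x, u⟫ - L * t * ‖u‖ ^ 2) t := by
    intro t
    have h1 := aux_hasDerivAt_line F hF x u t
    have h2 : HasDerivAt (fun s : ℝ => s * ⟪gradient F x, u⟫) ⟪gradient F x, u⟫ t := by
      simpa using (hasDerivAt_id t).mul_const ⟪gradient F x, u⟫
    have h3 : HasDerivAt (fun s : ℝ => L / 2 * s ^ 2 * ‖u‖ ^ 2) (L * t * ‖u‖ ^ 2) t := by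
      have hp : HasDerivAt (fun s : ℝ => s ^ 2) (2 * t) t := by
        simpa using hasDerivAt_pow 2 t
      have := (hp.const_mul (L / 2)).mul_const (‖u‖ ^ 2)
      exact this.congr_deriv (by ring)
    exact (h1.sub h2).sub h3
  have hmono : AntitoneOn g (Set.Icc 0 1) := by
    apply antitoneOn_of_deriv_nonpos (convex_Icc 0 1)
    · exact Continuous.continuousOn
        ((fun t => (hderiv t).differentiableAt) |> Differentiable.continuous)
    · intro t _
      exact (hderiv t).differentiableAt.differentiableWithinAt
    · intro t ht
      rw [(hderiv t).deriv]
      rw [interior_Icc] at ht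
      have ht0 : 0 < t := ht.1
      have hcs : ⟪gradient F (x + t • u) - gradient F x, u⟫
          ≤ ‖gradient F (x + t • u) - gradient F x‖ * ‖u‖ := real_inner_le_norm _ _
      have hlip' : ‖gradient F (x + t • u) - gradient F x‖ ≤ L * (t * ‖u‖) := by
        have := hlip (x + t • u) x
        simpa [norm_smul, abs_of_pos ht0] using this
      have hkey : ⟪gradient F (x + t • u), u⟫ - ⟪gradient F x, u⟫ ≤ L * t * ‖u‖ ^ 2 := by
        rw [← inner_sub_left]
        calc ⟪gradient F (x + t • u) - gradient F x, u⟫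
            ≤ ‖gradient F (x + t • u) - gradient F x‖ * ‖u‖ := hcs
          _ ≤ L * (t * ‖u‖) * ‖u‖ := mul_le_mul_of_nonneg_right hlip' (norm_nonneg _)
          _ = L * t * ‖u‖ ^ 2 := by ring
      linarith
  have h01 := hmono (Set.mem_Icc.2 ⟨le_refl 0, zero_le_one⟩)
    (Set.mem_Icc.2 ⟨zero_le_one, le_refl 1⟩) zero_le_one
  simp only [hg] at h01
  simp only [zero_smul, add_zero, one_smul, zero_mul, sub_zero, zero_pow, one_pow, mul_zero,
    mul_one, one_mul] at h01
  linarith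

/-- Bias–variance decomposition of the mean of squared norms. -/
lemma aux_mean_sq (hn : 0 < n) (v : Fin n → Vec d) (vb : Vec d)
    (hvb : ∑ i, v i = (n : ℝ) • vb) :
    (n : ℝ)⁻¹ * ∑ i, ‖v i‖ ^ 2
      = ‖vb‖ ^ 2 + (n : ℝ)⁻¹ * ∑ i, ‖v i - vb‖ ^ 2 := by
  have hnR : (0:ℝ) < (n:ℝ) := by positivity
  have h1 : ∑ i, ‖v i - vb‖ ^ 2 = ∑ i, ‖v i‖ ^ 2 - (n : ℝ) * ‖vb‖ ^ 2 := by
    have h2 : ∀ i : Fin n, ‖v i - vb‖ ^ 2 = ‖v i‖ ^ 2 - 2 * ⟪v i, vb⟫ + ‖vb‖ ^ 2 :=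
      fun i => norm_sub_sq_real _ _
    rw [Finset.sum_congr rfl (fun i _ => h2 i)]
    have h3 : ∑ i, ⟪v i, vb⟫ = (n : ℝ) * ‖vb‖ ^ 2 := by
      rw [← sum_inner, hvb, real_inner_smul_left, real_inner_self_eq_norm_sq]
    rw [Finset.sum_add_distrib, Finset.sum_sub_distrib, ← Finset.mul_sum, h3,
      Finset.sum_const, Finset.card_univ, Fintype.card_fin, nsmul_eq_mul]
    ring
  rw [h1]
  field_simp
  ring

/-- Young-type inequality for the inner product. -/
lemma aux_young (a b : Vec d) (c : ℝ) (hc : 0 < c) :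
    -2 * ⟪a, b⟫ ≤ c * ‖a‖ ^ 2 + c⁻¹ * ‖b‖ ^ 2 := by
  have h1 : -⟪a, b⟫ ≤ ‖a‖ * ‖b‖ := by
    nlinarith [abs_real_inner_le_norm a b, neg_abs_le ⟪a, b⟫]
  apply (mul_le_mul_iff_right₀ hc).1
  have hR : c * (c * ‖a‖ ^ 2 + c⁻¹ * ‖b‖ ^ 2) = c ^ 2 * ‖a‖ ^ 2 + ‖b‖ ^ 2 := by
    field_simp
  rw [hR]
  nlinarith [sq_nonneg (c * ‖a‖ - ‖b‖), mul_le_mul_of_nonneg_left h1 (le_of_lt hc)]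

end CalcMachinery

/-! ### Auxiliary machinery: structure of the algorithm's distributions -/

section StructMachinery

variable {n d : ℕ}

lemma aux_unifSubsets_self (hn : 0 < n) : unifSubsets n n = PMF.pure (Finset.univ : Finset (Fin n)) := by
  have hset : Finset.powersetCard n (Finset.univ : Finset (Fin n)) = {Finset.univ} := by
    have h2 := Finset.powersetCard_self (Finset.univ : Finset (Fin n))
    rwa [Finset.card_univ, Fintype.card_fin] at h2
  rw [unifSubsets, dif_pos (by rw [hset]; exact Finset.singleton_nonempty _)]
  ext b
  rw [PMF.uniformOfFinset_apply, PMF.pure_apply]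
  by_cases hb : b = Finset.univ
  · simp [hb, hset]
  · simp [hset, hb, Finset.mem_singleton]

lemma aux_powersetCard_one_nonempty (hn : 0 < n) :
    (Finset.powersetCard 1 (Finset.univ : Finset (Fin n))).Nonempty := by
  rw [Finset.powersetCard_one]
  simp [Finset.univ_nonempty_iff, ← Fin.pos_iff_nonempty, hn]

lemma aux_pexp_innerStep (hn : 0 < n) (f : Fin n → Vec d → ℝ) (x0 g0 : Vec d) (η : ℝ)
    (x : Vec d) (F : Vec d → ℝ) :
    pexp (innerStep f x0 g0 η 1 x) F
      = (n : ℝ)⁻¹ * ∑ i, F (x - η • (gradient (f i) x - gradient (f i) x0 + g0)) := by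
  rw [innerStep, unifSubsets, dif_pos (aux_powersetCard_one_nonempty hn)]
  rw [aux_pexp_map _ _ _ (by rw [PMF.support_uniformOfFinset]; exact Finset.finite_toSet _)]
  rw [aux_pexp_uniformOfFinset]
  congr 1
  · congr 1
    rw [Finset.powersetCard_one, Finset.card_map, Finset.card_univ, Fintype.card_fin]
  · rw [Finset.powersetCard_one, Finset.sum_map]
    apply Finset.sum_congr rfl
    intro i _
    have : (Function.Embedding.mk _ Finset.singleton_injective) i = ({i} : Finset (Fin n)) := rfl
    rw [this, aux_gradBatch_singleton, aux_gradBatch_singleton]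

lemma aux_innerStep_supportFinite (f : Fin n → Vec d → ℝ) (x0 g0 : Vec d) (η : ℝ) (b : ℕ)
    (x : Vec d) : (innerStep f x0 g0 η b x).support.Finite := by
  rw [innerStep, PMF.support_map]
  exact Set.Finite.image _ (Set.toFinite _)

lemma aux_innerIter_supportFinite (f : Fin n → Vec d → ℝ) (x0 g0 : Vec d) (η : ℝ) (b : ℕ)
    (k : ℕ) (x : Vec d) : (innerIter f x0 g0 η b k x).support.Finite := by
  induction k generalizing x with
  | zero => rw [innerIter]; exact (Set.finite_singleton x).subset (by simp)
  | succ m ih =>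
      rw [innerIter]
      exact aux_support_bind_finite _ _ (aux_innerStep_supportFinite f x0 g0 η b x) (fun y => ih y)

lemma aux_innerIter_succ (f : Fin n → Vec d → ℝ) (x0 g0 : Vec d) (η : ℝ) (b : ℕ)
    (k : ℕ) (x : Vec d) :
    innerIter f x0 g0 η b (k + 1) x
      = (innerIter f x0 g0 η b k x).bind (innerStep f x0 g0 η b) := by
  have h0 : innerIter f x0 g0 η b 0 = PMF.pure := funext fun y => rfl
  induction k generalizing x with
  | zero =>
      rw [show innerIter f x0 g0 η b (0 + 1) x
          = (innerStep f x0 g0 η b x).bind (innerIter f x0 g0 η b 0) from rfl, h0,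
        PMF.bind_pure, PMF.pure_bind]
  | succ m ih =>
      rw [show innerIter f x0 g0 η b (m + 1 + 1) x
          = (innerStep f x0 g0 η b x).bind (innerIter f x0 g0 η b (m + 1)) from rfl]
      conv_lhs => rw [show (innerIter f x0 g0 η b (m + 1))
          = fun y => (innerIter f x0 g0 η b m y).bind (innerStep f x0 g0 η b)
          from funext fun y => ih y]
      rw [← PMF.bind_bind]
      rfl

lemma aux_epoch_eq (hn : 0 < n) (f : Fin n → Vec d → ℝ) (η : ℝ) (x : Vec d) :
    epoch f η n 1 x
      = (geom ((n : ℝ) / ((n : ℝ) + 1))).bind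
          (fun N => innerIter f x (gradBatch f Finset.univ x) η 1 N x) := by
  rw [epoch, epochFull, aux_unifSubsets_self hn, PMF.pure_bind, PMF.map_comp]
  rw [show (Prod.snd ∘ fun y : Vec d => ((Finset.univ : Finset (Fin n)), y)) = id from rfl]
  rw [PMF.map_id]
  norm_num

end StructMachinery

/-! ### Auxiliary machinery: one-step expectation bounds -/

section CoreMachinery

open scoped RealInnerProductSpace

variable {d n : ℕ}

lemma aux_geom_apply (q : ℝ) (h1 : 0 < 1 - q) (h2 : 1 - q ≤ 1) (k : ℕ) :
    geom q k = ENNReal.ofReal (q ^ k * (1 - q)) := by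
  rw [geom, dif_pos ⟨h1, h2⟩]
  show ENNReal.ofReal (ProbabilityTheory.geometricPMFReal (1 - q) k) = _
  rw [ProbabilityTheory.geometricPMFReal, sub_sub_cancel]

/-- Mean of the SVRG direction. -/
lemma aux_nu_sum (f : Fin n → Vec d → ℝ) (hn : 0 < n)
    (hdiff : ∀ i, Differentiable ℝ (f i)) (x0 x : Vec d) :
    ∑ i, (gradient (f i) x - gradient (f i) x0 + gradient (avg n d f) x0)
      = (n : ℝ) • gradient (avg n d f) x := by
  rw [Finset.sum_add_distrib, Finset.sum_sub_distrib, Finset.sum_const, Finset.card_univ,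
    Fintype.card_fin, ← aux_smul_gradient_avg f hdiff hn x, ← aux_smul_gradient_avg f hdiff hn x0,
    ← Nat.cast_smul_eq_nsmul ℝ]
  abel

/-- Second moment of the SVRG direction. -/
lemma aux_nu_M2 (f : Fin n → Vec d → ℝ) (L : ℝ) (hn : 0 < n) (hL : 0 < L)
    (hdiff : ∀ i, Differentiable ℝ (f i))
    (hlip : ∀ i (x y : Vec d), ‖gradient (f i) x - gradient (f i) y‖ ≤ L * ‖x - y‖)
    (x0 x : Vec d) :
    (n : ℝ)⁻¹ * ∑ i, ‖gradient (f i) x - gradient (f i) x0 + gradient (avg n d f) x0‖ ^ 2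
      ≤ ‖gradient (avg n d f) x‖ ^ 2 + L ^ 2 * ‖x - x0‖ ^ 2 := by
  have hnR : (0:ℝ) < (n:ℝ) := Nat.cast_pos.2 hn
  set GF := fun y => gradient (avg n d f) y with hGF
  set ν := fun i => gradient (f i) x - gradient (f i) x0 + GF x0 with hν
  set u := fun i => gradient (f i) x - gradient (f i) x0 with hu
  have hνs : ∑ i, ν i = (n : ℝ) • GF x := aux_nu_sum f hn hdiff x0 x
  have h1 := aux_mean_sq hn ν (GF x) hνs
  have hub : ∑ i, u i = (n : ℝ) • (GF x - GF x0) := by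
    rw [hu, Finset.sum_sub_distrib, smul_sub, ← aux_smul_gradient_avg f hdiff hn x,
      ← aux_smul_gradient_avg f hdiff hn x0]
  have h2 := aux_mean_sq hn u (GF x - GF x0) hub
  have h4 : ∑ i, ‖ν i - GF x‖ ^ 2 = ∑ i, ‖u i - (GF x - GF x0)‖ ^ 2 :=
    Finset.sum_congr rfl fun i _ => by rw [show ν i - GF x = u i - (GF x - GF x0) by
      rw [hν, hu]; rw [sub_sub_eq_add_sub]]
  have h5 : ∑ i, ‖u i‖ ^ 2 ≤ (n : ℝ) * (L ^ 2 * ‖x - x0‖ ^ 2) := by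
    calc ∑ i, ‖u i‖ ^ 2 ≤ ∑ _i : Fin n, L ^ 2 * ‖x - x0‖ ^ 2 := by
          apply Finset.sum_le_sum
          intro i _
          nlinarith [mul_self_le_mul_self (norm_nonneg (u i)) (hlip i x x0),
            sq_nonneg (‖x - x0‖), norm_nonneg (u i)]
      _ = (n : ℝ) * (L ^ 2 * ‖x - x0‖ ^ 2) := by
          rw [Finset.sum_const, Finset.card_univ, Fintype.card_fin, nsmul_eq_mul]
  have h7 : 0 ≤ ‖GF x - GF x0‖ ^ 2 := sq_nonneg _
  have h8 : (n:ℝ)⁻¹ * ∑ i, ‖u i‖ ^ 2 ≤ L ^ 2 * ‖x - x0‖ ^ 2 := by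
    rw [inv_mul_le_iff₀ hnR]
    exact h5
  rw [h1, h4]
  nlinarith [h2, h8, h7]

lemma aux_step_phi (f : Fin n → Vec d → ℝ) (L : ℝ) (xstar : Vec d) (hn : 0 < n) (hL : 0 < L)
    (hdiff : ∀ i, Differentiable ℝ (f i))
    (hlip : ∀ i (x y : Vec d), ‖gradient (f i) x - gradient (f i) y‖ ≤ L * ‖x - y‖)
    (x0 x : Vec d) (η : ℝ) (hη : 0 ≤ η) :
    pexp (innerStep f x0 (gradient (avg n d f) x0) η 1 x)
        (fun y => avg n d f y - avg n d f xstar)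
      ≤ (avg n d f x - avg n d f xstar)
        - (η - η ^ 2 * L / 2) * ‖gradient (avg n d f) x‖ ^ 2
        + (η ^ 2 * L ^ 3 / 2) * ‖x - x0‖ ^ 2 := by
  have hnR : (0:ℝ) < (n:ℝ) := Nat.cast_pos.2 hn
  set GF := fun y => gradient (avg n d f) y with hGF
  set ν := fun i => gradient (f i) x - gradient (f i) x0 + GF x0 with hν
  have hνs : ∑ i, ν i = (n : ℝ) • GF x := aux_nu_sum f hn hdiff x0 x
  have hlipavg : ∀ a b : Vec d, ‖gradient (avg n d f) a - gradient (avg n d f) b‖ ≤ L * ‖a - b‖ :=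
    aux_lip_grad_avg f L hdiff hlip hn
  have hdiffavg : Differentiable ℝ (avg n d f) := fun y =>
    ((aux_hasGradientAt_avg f hdiff y).differentiableAt)
  rw [aux_pexp_innerStep hn]
  have hstep : ∀ i : Fin n,
      avg n d f (x - η • ν i) - avg n d f xstar
        ≤ (avg n d f x - avg n d f xstar) + (-(η * ⟪GF x, ν i⟫)) + η ^ 2 * (L / 2) * ‖ν i‖ ^ 2 := by
    intro i
    have hd := aux_descent (avg n d f) L hdiffavg hlipavg x (-(η • ν i))
    have e1 : x + -(η • ν i) = x - η • ν i := by abel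
    have e2 : ⟪gradient (avg n d f) x, -(η • ν i)⟫ = -(η * ⟪GF x, ν i⟫) := by
      rw [inner_neg_right, real_inner_smul_right, hGF]
    have e3 : L / 2 * ‖-(η • ν i)‖ ^ 2 = η ^ 2 * (L / 2) * ‖ν i‖ ^ 2 := by
      rw [norm_neg, norm_smul, mul_pow, Real.norm_eq_abs, sq_abs]
      ring
    rw [e1, e2, e3] at hd
    linarith
  have hin : ∑ i, ⟪GF x, ν i⟫ = (n:ℝ) * ‖GF x‖ ^ 2 := by
    rw [← inner_sum, hνs, real_inner_smul_right, real_inner_self_eq_norm_sq]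
  calc (n:ℝ)⁻¹ * ∑ i, (avg n d f (x - η • ν i) - avg n d f xstar)
      ≤ (n:ℝ)⁻¹ * ∑ i, ((avg n d f x - avg n d f xstar) + (-(η * ⟪GF x, ν i⟫))
          + η ^ 2 * (L / 2) * ‖ν i‖ ^ 2) := by
        apply mul_le_mul_of_nonneg_left (Finset.sum_le_sum fun i _ => hstep i)
          (le_of_lt (by positivity))
    _ = (avg n d f x - avg n d f xstar) - η * ‖GF x‖ ^ 2
          + η ^ 2 * (L / 2) * ((n:ℝ)⁻¹ * ∑ i, ‖ν i‖ ^ 2) := by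
        rw [Finset.sum_add_distrib, Finset.sum_add_distrib, Finset.sum_const,
          Finset.card_univ, Fintype.card_fin, nsmul_eq_mul]
        rw [show ∑ i, -(η * ⟪GF x, ν i⟫) = -(η * ∑ i, ⟪GF x, ν i⟫) by
          rw [Finset.sum_neg_distrib, Finset.mul_sum]]
        rw [hin, ← Finset.mul_sum]
        field_simp
        ring
    _ ≤ (avg n d f x - avg n d f xstar) - (η - η ^ 2 * L / 2) * ‖GF x‖ ^ 2
          + (η ^ 2 * L ^ 3 / 2) * ‖x - x0‖ ^ 2 := by
        have hM2 := aux_nu_M2 f L hn hL hdiff hlip x0 x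
        have hc : (0:ℝ) ≤ η ^ 2 * (L / 2) := by positivity
        nlinarith [mul_le_mul_of_nonneg_left hM2 hc]

lemma aux_step_psi (f : Fin n → Vec d → ℝ) (L : ℝ) (hn : 0 < n) (hL : 0 < L)
    (hdiff : ∀ i, Differentiable ℝ (f i))
    (hlip : ∀ i (x y : Vec d), ‖gradient (f i) x - gradient (f i) y‖ ≤ L * ‖x - y‖)
    (x0 x : Vec d) (η τ : ℝ) (hη : 0 ≤ η) (hτ : 0 < τ) :
    pexp (innerStep f x0 (gradient (avg n d f) x0) η 1 x) (fun y => ‖y - x0‖ ^ 2)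
      ≤ (1 + η * L * τ + η ^ 2 * L ^ 2) * ‖x - x0‖ ^ 2
        + (η * (L * τ)⁻¹ + η ^ 2) * ‖gradient (avg n d f) x‖ ^ 2 := by
  have hnR : (0:ℝ) < (n:ℝ) := Nat.cast_pos.2 hn
  set GF := fun y => gradient (avg n d f) y with hGF
  set ν := fun i => gradient (f i) x - gradient (f i) x0 + GF x0 with hν
  have hνs : ∑ i, ν i = (n : ℝ) • GF x := aux_nu_sum f hn hdiff x0 x
  rw [aux_pexp_innerStep hn]
  have hexp : ∀ i : Fin n,
      ‖(x - η • ν i) - x0‖ ^ 2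
        = ‖x - x0‖ ^ 2 + (-(2 * η * ⟪x - x0, ν i⟫)) + η ^ 2 * ‖ν i‖ ^ 2 := by
    intro i
    have e0 : (x - η • ν i) - x0 = (x - x0) - η • ν i := by abel
    rw [e0, norm_sub_sq_real, real_inner_smul_right, norm_smul, Real.norm_eq_abs, mul_pow, sq_abs]
    ring
  have hin : ∑ i, ⟪x - x0, ν i⟫ = (n:ℝ) * ⟪x - x0, GF x⟫ := by
    rw [← inner_sum, hνs, real_inner_smul_right]
  have hmid : (n:ℝ)⁻¹ * ∑ i, ‖(x - η • ν i) - x0‖ ^ 2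
      = ‖x - x0‖ ^ 2 - 2 * η * ⟪x - x0, GF x⟫ + η ^ 2 * ((n:ℝ)⁻¹ * ∑ i, ‖ν i‖ ^ 2) := by
    rw [Finset.sum_congr rfl fun i _ => hexp i]
    rw [Finset.sum_add_distrib, Finset.sum_add_distrib, Finset.sum_const,
      Finset.card_univ, Fintype.card_fin, nsmul_eq_mul]
    rw [show ∑ i, -(2 * η * ⟪x - x0, ν i⟫) = -(2 * η * ∑ i, ⟪x - x0, ν i⟫) by
      rw [Finset.sum_neg_distrib, Finset.mul_sum]]
    rw [hin, ← Finset.mul_sum]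
    field_simp
    ring
  rw [hmid]
  have hyoung : -(2 * ⟪x - x0, GF x⟫) ≤ (L * τ) * ‖x - x0‖ ^ 2 + (L * τ)⁻¹ * ‖GF x‖ ^ 2 := by
    have := aux_young (x - x0) (GF x) (L * τ) (by positivity)
    linarith
  have hM2 := aux_nu_M2 f L hn hL hdiff hlip x0 x
  nlinarith [mul_le_mul_of_nonneg_left hyoung hη, mul_le_mul_of_nonneg_left hM2 (sq_nonneg η)]

end CoreMachinery

/-! ### Auxiliary machinery: telescoping and numerics -/

section FinalMachinery

variable {d n : ℕ}

lemma aux_telescope (u v : ℕ → ℝ) (r c κ : ℝ) (hr : 0 ≤ r) (hrc : r * c = 1) (hc : 0 ≤ c)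
    (hu : ∀ k, 0 ≤ u k) (hκ : 0 ≤ κ)
    (hrec : ∀ k, u (k + 1) ≤ c * u k - κ * v k) :
    ∀ K : ℕ, κ * ∑ k ∈ Finset.range K, r ^ k * v k ≤ c * u 0 := by
  have main : ∀ K : ℕ, κ * ∑ k ∈ Finset.range K, r ^ k * v k
      ≤ c * u 0 - c * r ^ K * u K := by
    intro K
    induction K with
    | zero => simp
    | succ K ih =>
        rw [Finset.sum_range_succ, mul_add]
        have h1 : κ * (r ^ K * v K) ≤ r ^ K * (c * u K - u (K + 1)) := by
          have h2 : κ * v K ≤ c * u K - u (K + 1) := by linarith [hrec K]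
          calc κ * (r ^ K * v K) = r ^ K * (κ * v K) := by ring
            _ ≤ r ^ K * (c * u K - u (K + 1)) :=
                mul_le_mul_of_nonneg_left h2 (pow_nonneg hr K)
        have h3 : c * r ^ (K + 1) = r ^ K := by
          rw [pow_succ]
          calc c * (r ^ K * r) = (r * c) * r ^ K := by ring
            _ = r ^ K := by rw [hrc, one_mul]
        calc κ * ∑ k ∈ Finset.range K, r ^ k * v k + κ * (r ^ K * v K)
            ≤ (c * u 0 - c * r ^ K * u K) + r ^ K * (c * u K - u (K + 1)) := by
              linarith [h1]
          _ = c * u 0 - r ^ K * u (K + 1) := by ring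
          _ = c * u 0 - c * r ^ (K + 1) * u (K + 1) := by rw [h3]
  intro K
  calc κ * ∑ k ∈ Finset.range K, r ^ k * v k ≤ c * u 0 - c * r ^ K * u K := main K
    _ ≤ c * u 0 := by
        have : 0 ≤ c * r ^ K * u K := mul_nonneg (mul_nonneg hc (pow_nonneg hr K)) (hu K)
        linarith

lemma aux_numA (γ t L : ℝ) (hγ0 : 0 < γ) (hγ : γ ≤ 1 / 3) (ht0 : 0 < t) (ht : t ≤ 1 / 2)
    (hL : 0 < L) :
    (γ * t ^ 2 / L) ^ 2 * L ^ 3 / 2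
        + (γ ^ 2 * t * L) * ((γ * t ^ 2 / L) * L * t + (γ * t ^ 2 / L) ^ 2 * L ^ 2)
      ≤ (γ ^ 2 * t * L) * t ^ 3 := by
  have hL' : L ≠ 0 := ne_of_gt hL
  have e1 : (γ * t ^ 2 / L) ^ 2 * L ^ 3 / 2 = γ ^ 2 * t ^ 4 * L / 2 := by
    field_simp
  have e2 : (γ ^ 2 * t * L) * ((γ * t ^ 2 / L) * L * t + (γ * t ^ 2 / L) ^ 2 * L ^ 2)
      = γ ^ 3 * t ^ 4 * L + γ ^ 4 * t ^ 5 * L := by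
    field_simp
  rw [e1, e2]
  have hg2 : γ ^ 2 ≤ 1 / 9 := by nlinarith
  have h1 : γ + γ ^ 2 * t ≤ 1 / 2 := by nlinarith [mul_le_mul hg2 ht (le_of_lt ht0) (by norm_num : (0:ℝ) ≤ 1/9)]
  have hP : (0:ℝ) ≤ γ ^ 2 * t ^ 4 * L := by positivity
  have h2 : γ ^ 2 * t ^ 4 * L * (γ + γ ^ 2 * t) ≤ γ ^ 2 * t ^ 4 * L * (1 / 2) :=
    mul_le_mul_of_nonneg_left h1 hP
  nlinarith [h2]

lemma aux_numB (γ t L : ℝ) (hγ0 : 0 < γ) (hγ : γ ≤ 1 / 3) (ht0 : 0 < t) (ht : t ≤ 1 / 2)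
    (hL : 0 < L) :
    (γ ^ 2 * t * L) * ((γ * t ^ 2 / L) * (L * t)⁻¹ + (γ * t ^ 2 / L) ^ 2) + (γ * t ^ 2 / L) / 2
      ≤ (γ * t ^ 2 / L) - (γ * t ^ 2 / L) ^ 2 * L / 2 := by
  have hL' : L ≠ 0 := ne_of_gt hL
  have ht' : t ≠ 0 := ne_of_gt ht0
  have e1 : (γ ^ 2 * t * L) * ((γ * t ^ 2 / L) * (L * t)⁻¹ + (γ * t ^ 2 / L) ^ 2)
      = (γ ^ 3 * t ^ 2 + γ ^ 4 * t ^ 5) / L := by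
    field_simp
  have e2 : (γ * t ^ 2 / L) - (γ * t ^ 2 / L) ^ 2 * L / 2 - (γ * t ^ 2 / L) / 2
      = (γ * t ^ 2 / 2 - γ ^ 2 * t ^ 4 / 2) / L := by
    field_simp; ring
  rw [e1, ← sub_nonneg]
  have e3 : (γ * t ^ 2 / L) - (γ * t ^ 2 / L) ^ 2 * L / 2
        - ((γ ^ 3 * t ^ 2 + γ ^ 4 * t ^ 5) / L + (γ * t ^ 2 / L) / 2)
      = (γ * t ^ 2 / 2 - γ ^ 2 * t ^ 4 / 2 - γ ^ 3 * t ^ 2 - γ ^ 4 * t ^ 5) / L := by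
    field_simp; ring
  rw [e3]
  apply div_nonneg _ hL.le
  have ht2 : t ^ 2 ≤ 1 / 4 := by nlinarith
  have ht3 : t ^ 3 ≤ 1 / 8 := by nlinarith
  have hg2 : γ ^ 2 ≤ 1 / 9 := by nlinarith
  have hg3 : γ ^ 3 ≤ 1 / 27 := by nlinarith
  have hA : γ * t ^ 2 ≤ 1 / 12 := by
    nlinarith [mul_le_mul hγ ht2 (sq_nonneg t) (by norm_num : (0:ℝ) ≤ 1/3)]
  have hB : γ ^ 3 * t ^ 3 ≤ 1 / 216 := by
    nlinarith [mul_le_mul hg3 ht3 (by positivity : (0:ℝ) ≤ t ^ 3) (by norm_num : (0:ℝ) ≤ 1/27)]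
  have hsum : γ ^ 2 + γ ^ 3 * t ^ 3 + γ * t ^ 2 / 2 ≤ 1 / 2 := by linarith
  have hkey : γ * t ^ 2 * (γ ^ 2 + γ ^ 3 * t ^ 3 + γ * t ^ 2 / 2) ≤ γ * t ^ 2 * (1 / 2) :=
    mul_le_mul_of_nonneg_left hsum (by positivity)
  nlinarith [hkey]

lemma aux_combine (P Q φz ψz G nInv ηc L t Λ μ : ℝ)
    (H1 : P ≤ φz - (ηc - ηc^2*L/2)*G + (ηc^2*L^3/2)*ψz)
    (H2 : Λ*Q ≤ Λ*((1+ηc*L*t+ηc^2*L^2)*ψz + (ηc*(L*t)⁻¹+ηc^2)*G))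
    (H3 : (ηc^2*L^3/2 + Λ*(ηc*L*t+ηc^2*L^2))*ψz ≤ (Λ*nInv)*ψz)
    (H4 : (Λ*(ηc*(L*t)⁻¹+ηc^2) + ηc/2)*G ≤ (ηc - ηc^2*L/2)*G)
    (H5 : (ηc/2)*(2*μ*φz) ≤ (ηc/2)*G) :
    P + Λ*Q ≤ (1+nInv)*(φz+Λ*ψz) + (-(nInv+ηc*μ))*φz := by
  have hsum := add_le_add (add_le_add (add_le_add (add_le_add H1 H2) H3) H4) H5
  linarith [hsum]

end FinalMachinery

section EpochBound

set_option maxHeartbeats 1600000 in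
/-- One-epoch contraction bound. -/
lemma aux_epoch_bound (d n : ℕ) (f : Fin n → Vec d → ℝ) (L γ μ : ℝ) (hL : 0 < L) (hμ : 0 < μ)
    (hn8 : 8 ≤ n)
    (hdiff : ∀ i, Differentiable ℝ (f i))
    (hlip : ∀ i (x y : Vec d), ‖gradient (f i) x - gradient (f i) y‖ ≤ L * ‖x - y‖)
    (xstar : Vec d) (hmin : ∀ x : Vec d, avg n d f xstar ≤ avg n d f x)
    (hPL : ∀ x : Vec d,
      2 * μ * (avg n d f x - avg n d f xstar) ≤ ‖gradient (avg n d f) x‖ ^ 2)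
    (ηc : ℝ) (hγ : 0 < γ) (hγ13 : γ ≤ 1 / 3)
    (hstep : ηc * L = γ * (n : ℝ) ^ (-(2 / 3) : ℝ)) (x : Vec d) :
    auxPsi (epoch f ηc n 1 x) (fun y => avg n d f y - avg n d f xstar)
      ≤ ENNReal.ofReal ((5 * L / (μ * γ * (n : ℝ) ^ ((1 : ℝ) / 3) + 5 * L)) *
          (avg n d f x - avg n d f xstar)) := by
  classical
  have hn : 0 < n := by omega
  have hnR : (0:ℝ) < (n:ℝ) := Nat.cast_pos.2 hn
  have hnR8 : (8:ℝ) ≤ (n:ℝ) := by exact_mod_cast hn8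
  set t : ℝ := (n:ℝ) ^ (-(1/3) : ℝ) with htdef
  have ht0 : 0 < t := Real.rpow_pos_of_pos hnR _
  have ht3 : t ^ 3 = (n:ℝ)⁻¹ := by
    rw [htdef, ← Real.rpow_natCast ((n:ℝ) ^ (-(1/3) : ℝ)) 3, ← Real.rpow_mul hnR.le]
    norm_num
    exact Real.rpow_neg_one _
  have ht : t ≤ 1 / 2 := by
    have h8 : (n:ℝ)⁻¹ ≤ 1 / 8 := by
      rw [show (n:ℝ)⁻¹ = 1 / (n:ℝ) by rw [one_div], div_le_div_iff₀ hnR (by norm_num : (0:ℝ) < 8)]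
      linarith
    by_contra h
    push_neg at h
    have h2 : (1:ℝ)/8 < t ^ 3 := by nlinarith [mul_pos ht0 ht0, sq_nonneg (t - 1/2), sq_nonneg (t + 1/2)]
    rw [ht3] at h2
    linarith
  have h23 : (n:ℝ) ^ (-(2/3) : ℝ) = t ^ 2 := by
    rw [htdef, ← Real.rpow_natCast ((n:ℝ) ^ (-(1/3) : ℝ)) 2, ← Real.rpow_mul hnR.le]
    norm_num
  have h13 : (n:ℝ) ^ ((1:ℝ)/3) = t⁻¹ := by
    rw [htdef, ← Real.rpow_neg_one ((n:ℝ) ^ (-(1/3) : ℝ)), ← Real.rpow_mul hnR.le]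
    norm_num
  have hηval : ηc = γ * t ^ 2 / L := by
    rw [h23] at hstep
    rw [eq_div_iff (ne_of_gt hL)]
    exact hstep
  have hηpos : 0 < ηc := by rw [hηval]; positivity
  set φ : Vec d → ℝ := fun y => avg n d f y - avg n d f xstar with hφdef
  set ψ : Vec d → ℝ := fun y => ‖y - x‖ ^ 2 with hψdef
  set Λ : ℝ := γ ^ 2 * t * L with hΛdef
  set Sf : Vec d → ℝ := fun y => φ y + Λ * ψ y with hSfdef
  set κ : ℝ := (n:ℝ)⁻¹ + ηc * μ with hκdef
  have hφ0 : ∀ y, 0 ≤ φ y := fun y => sub_nonneg.2 (hmin y)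
  have hΛ0 : (0:ℝ) ≤ Λ := by rw [hΛdef]; positivity
  have hS0 : ∀ y, 0 ≤ Sf y := fun y => add_nonneg (hφ0 y) (mul_nonneg hΛ0 (sq_nonneg _))
  have hκ0 : 0 < κ := by rw [hκdef]; positivity
  set g0 : Vec d := gradient (avg n d f) x with hg0def
  -- pointwise inequality
  have hpt : ∀ z, pexp (innerStep f x g0 ηc 1 z) Sf
      ≤ (1 + (n:ℝ)⁻¹) * Sf z + (-κ) * φ z := by
    intro z
    have hstepφ := aux_step_phi f L xstar hn hL hdiff hlip x z ηc hηpos.le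
    have hstepψ := aux_step_psi f L hn hL hdiff hlip x z ηc t hηpos.le ht0
    have hlin : pexp (innerStep f x g0 ηc 1 z) Sf
        = pexp (innerStep f x g0 ηc 1 z) φ + Λ * pexp (innerStep f x g0 ηc 1 z) ψ := by
      have h := aux_pexp_linear (innerStep f x g0 ηc 1 z) φ ψ 1 Λ
        (aux_innerStep_supportFinite f x g0 ηc 1 z)
      rw [one_mul] at h
      rw [← h]
      congr 1
      funext y
      rw [hSfdef]
      ring
    have hNA : ηc ^ 2 * L ^ 3 / 2 + Λ * (ηc * L * t + ηc ^ 2 * L ^ 2) ≤ Λ * t ^ 3 := by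
      rw [hηval, hΛdef]
      exact aux_numA γ t L hγ hγ13 ht0 ht hL
    have hNB : Λ * (ηc * (L * t)⁻¹ + ηc ^ 2) + ηc / 2 ≤ ηc - ηc ^ 2 * L / 2 := by
      rw [hηval, hΛdef]
      exact aux_numB γ t L hγ hγ13 ht0 ht hL
    have hNA' : Λ * t ^ 3 = Λ * (n:ℝ)⁻¹ := by rw [ht3]
    have hPLz : 2 * μ * φ z ≤ ‖gradient (avg n d f) z‖ ^ 2 := hPL z
    have hψz : (0:ℝ) ≤ ψ z := sq_nonneg _
    have hGz : (0:ℝ) ≤ ‖gradient (avg n d f) z‖ ^ 2 := sq_nonneg _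
    have hstepφ' : pexp (innerStep f x g0 ηc 1 z) φ
        ≤ φ z - (ηc - ηc ^ 2 * L / 2) * ‖gradient (avg n d f) z‖ ^ 2
          + (ηc ^ 2 * L ^ 3 / 2) * ψ z := hstepφ
    have hstepψ' : pexp (innerStep f x g0 ηc 1 z) ψ
        ≤ (1 + ηc * L * t + ηc ^ 2 * L ^ 2) * ψ z
          + (ηc * (L * t)⁻¹ + ηc ^ 2) * ‖gradient (avg n d f) z‖ ^ 2 := hstepψ
    have hkey := aux_combine (pexp (innerStep f x g0 ηc 1 z) φ)
      (pexp (innerStep f x g0 ηc 1 z) ψ) (φ z) (ψ z)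
      (‖gradient (avg n d f) z‖ ^ 2) ((n:ℝ)⁻¹) ηc L t Λ μ
      (by linarith [hstepφ']) (mul_le_mul_of_nonneg_left hstepψ' hΛ0)
      (by rw [← hNA']; exact mul_le_mul_of_nonneg_right (by linarith [hNA]) hψz)
      (mul_le_mul_of_nonneg_right (by linarith [hNB]) hGz)
      (mul_le_mul_of_nonneg_left hPLz (by positivity))
    rw [hlin]
    refine le_trans hkey (le_of_eq ?_)
    simp only [hSfdef, hκdef]
  -- sequence level
  set p : ℕ → PMF (Vec d) := fun k => innerIter f x g0 ηc 1 k x with hpdef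
  have hpfin : ∀ k, (p k).support.Finite := fun k =>
    aux_innerIter_supportFinite f x g0 ηc 1 k x
  set A : ℕ → ℝ := fun k => pexp (p k) φ with hAdef
  set Sq : ℕ → ℝ := fun k => pexp (p k) Sf with hSqdef
  have hSq0 : Sq 0 = φ x := by
    rw [hSqdef]
    show pexp (innerIter f x g0 ηc 1 0 x) Sf = φ x
    rw [show innerIter f x g0 ηc 1 0 x = PMF.pure x from rfl, aux_pexp_pure]
    show φ x + Λ * ‖x - x‖ ^ 2 = φ x
    simp
  have hu : ∀ k, 0 ≤ Sq k := fun k => aux_pexp_nonneg _ _ hS0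
  have hv : ∀ k, 0 ≤ A k := fun k => aux_pexp_nonneg _ _ hφ0
  have hrec : ∀ k, Sq (k + 1) ≤ (1 + (n:ℝ)⁻¹) * Sq k - κ * A k := by
    intro k
    have hstep1 : Sq (k + 1) = pexp ((p k).bind (innerStep f x g0 ηc 1)) Sf := by
      rw [hSqdef]
      show pexp (innerIter f x g0 ηc 1 (k+1) x) Sf = _
      rw [aux_innerIter_succ]
    rw [hstep1, aux_pexp_bind _ _ _ (hpfin k) (fun z => aux_innerStep_supportFinite f x g0 ηc 1 z)]
    have hb : ∑ z ∈ (hpfin k).toFinset, ((p k) z).toReal * pexp (innerStep f x g0 ηc 1 z) Sf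
        ≤ ∑ z ∈ (hpfin k).toFinset,
            ((p k) z).toReal * ((1 + (n:ℝ)⁻¹) * Sf z + (-κ) * φ z) :=
      Finset.sum_le_sum fun z _ => mul_le_mul_of_nonneg_left (hpt z) ENNReal.toReal_nonneg
    refine le_trans hb ?_
    rw [← aux_pexp_eq_sum (p k) _ (hpfin k), aux_pexp_linear _ _ _ _ _ (hpfin k)]
    have : (1 + (n:ℝ)⁻¹) * Sq k + (-κ) * A k = (1 + (n:ℝ)⁻¹) * Sq k - κ * A k := by ring
    rw [hSqdef, hAdef] at this ⊢
    linarith [le_of_eq this]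
  -- telescoping
  set r : ℝ := (n:ℝ) / ((n:ℝ) + 1) with hrdef
  have hr0 : (0:ℝ) ≤ r := by rw [hrdef]; positivity
  have hrc : r * (1 + (n:ℝ)⁻¹) = 1 := by
    rw [hrdef]
    field_simp
  have hc0 : (0:ℝ) ≤ 1 + (n:ℝ)⁻¹ := by positivity
  have htele := aux_telescope Sq A r (1 + (n:ℝ)⁻¹) κ hr0 hrc hc0 hu hκ0.le hrec
  set cf : ℝ := 5 * L / (μ * γ * (n : ℝ) ^ ((1 : ℝ) / 3) + 5 * L) with hcfdef
  have hrp : (0:ℝ) < (n : ℝ) ^ ((1 : ℝ) / 3) := Real.rpow_pos_of_pos hnR _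
  have hD : (0:ℝ) < μ * γ * (n : ℝ) ^ ((1 : ℝ) / 3) + 5 * L := by positivity
  have hcf0 : (0:ℝ) ≤ cf := by rw [hcfdef]; positivity
  have hcfκ : (n:ℝ)⁻¹ ≤ cf * κ := by
    have hne : t ≠ 0 := ne_of_gt ht0
    have hLne : L ≠ 0 := ne_of_gt hL
    rw [hcfdef, div_mul_eq_mul_div, le_div_iff₀ hD]
    rw [hκdef, h13, hηval, ← ht3]
    have key : t ^ 3 * (μ * γ * t⁻¹ + 5 * L) = μ * γ * t ^ 2 + 5 * L * t ^ 3 := by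
      field_simp
    have key2 : 5 * L * (t ^ 3 + γ * t ^ 2 / L * μ) = 5 * L * t ^ 3 + 5 * (γ * (t ^ 2 * μ)) := by
      field_simp
    rw [key, key2]
    nlinarith [mul_pos (mul_pos hμ hγ) (pow_pos ht0 2)]
  have h1r : 0 ≤ 1 - r := by
    rw [hrdef]
    have : (n:ℝ) / ((n:ℝ) + 1) ≤ 1 := by
      rw [div_le_one (by positivity)]
      linarith
    linarith
  have hreal : ∀ K : ℕ, ∑ k ∈ Finset.range K, (r ^ k * (1 - r)) * A k ≤ cf * φ x := by
    intro K
    have h1 := htele K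
    rw [hSq0] at h1
    have hmul : κ * (∑ k ∈ Finset.range K, (r ^ k * (1 - r)) * A k) ≤ κ * (cf * φ x) := by
      have e : ∑ k ∈ Finset.range K, (r ^ k * (1 - r)) * A k
          = (1 - r) * ∑ k ∈ Finset.range K, r ^ k * A k := by
        rw [Finset.mul_sum]
        exact Finset.sum_congr rfl fun k _ => by ring
      calc κ * (∑ k ∈ Finset.range K, (r ^ k * (1 - r)) * A k)
          = (1 - r) * (κ * ∑ k ∈ Finset.range K, r ^ k * A k) := by rw [e]; ring
        _ ≤ (1 - r) * ((1 + (n:ℝ)⁻¹) * φ x) := mul_le_mul_of_nonneg_left h1 h1r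
        _ = (n:ℝ)⁻¹ * φ x := by
            rw [hrdef]
            field_simp
            ring
        _ ≤ (cf * κ) * φ x := mul_le_mul_of_nonneg_right hcfκ (hφ0 x)
        _ = κ * (cf * φ x) := by ring
    exact le_of_mul_le_mul_left hmul hκ0
  -- assemble in ℝ≥0∞
  have h1mr : 0 < 1 - r := by
    rw [hrdef]
    have : (n:ℝ) / ((n:ℝ) + 1) < 1 := by
      rw [div_lt_one (by positivity)]
      linarith
    linarith
  have hle1 : 1 - r ≤ 1 := by linarith [hr0]
  have hepochEq : epoch f ηc n 1 x = (geom r).bind p := by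
    rw [aux_epoch_eq hn f ηc x, hrdef]
    congr 1
    funext N
    rw [aux_gradBatch_univ f hdiff x, hpdef, hg0def]
  rw [hepochEq, auxPsi_bind]
  have hterm : ∀ N : ℕ, geom r N * auxPsi (p N) φ
      = ENNReal.ofReal ((r ^ N * (1 - r)) * A N) := by
    intro N
    rw [aux_geom_apply r h1mr hle1, auxPsi_eq_ofReal_pexp _ _ (hpfin N) hφ0,
      ← ENNReal.ofReal_mul (by positivity)]
  rw [tsum_congr hterm]
  have hpartial : ∀ s : Finset ℕ,
      ∑ N ∈ s, ENNReal.ofReal ((r ^ N * (1 - r)) * A N)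
        ≤ ENNReal.ofReal (cf * φ x) := by
    intro s
    obtain ⟨M, hM⟩ := s.exists_nat_subset_range
    calc ∑ N ∈ s, ENNReal.ofReal ((r ^ N * (1 - r)) * A N)
        ≤ ∑ N ∈ Finset.range M, ENNReal.ofReal ((r ^ N * (1 - r)) * A N) :=
          Finset.sum_le_sum_of_subset hM
      _ = ENNReal.ofReal (∑ N ∈ Finset.range M, (r ^ N * (1 - r)) * A N) := by
          rw [ENNReal.ofReal_sum_of_nonneg]
          intro N _
          exact mul_nonneg (mul_nonneg (pow_nonneg hr0 N) h1mr.le) (hv N)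
      _ ≤ ENNReal.ofReal (cf * φ x) := ENNReal.ofReal_le_ofReal (hreal M)
  rw [ENNReal.tsum_eq_iSup_sum]
  exact iSup_le hpartial

end EpochBound

/-- **SVRG-type instance of the P-L bound (consequence of Theorem 3).**
Under Assumption A1 and the P-L condition with constant `μ > 0`, run SCSG with `B_j ≡ n`,
`b_j ≡ 1` and `η_j L = γ n^{-2/3}` for some `0 < γ ≤ 1/3`, with `n ≥ 8`.  Then
`E(f(x̃_T) − f*) ≤ (5L/(μ γ n^{1/3} + 5L))^T·Δ_f`. -/
theorem scsg_PL_svrg_instance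
    (d n : ℕ) (f : Fin n → Vec d → ℝ) (L γ μ : ℝ) (hL : 0 < L) (hμ : 0 < μ)
    (hn8 : 8 ≤ n)
    (hdiff : ∀ i, Differentiable ℝ (f i))
    (hlip : ∀ i (x y : Vec d), ‖gradient (f i) x - gradient (f i) y‖ ≤ L * ‖x - y‖)
    (xstar : Vec d) (hmin : ∀ x : Vec d, avg n d f xstar ≤ avg n d f x)
    (hPL : ∀ x : Vec d,
      2 * μ * (avg n d f x - avg n d f xstar) ≤ ‖gradient (avg n d f) x‖ ^ 2)
    (x0 : Vec d) (ηc : ℝ)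
    (hγ : 0 < γ) (hγ13 : γ ≤ 1 / 3)
    (hstep : ηc * L = γ * (n : ℝ) ^ (-(2 / 3) : ℝ)) :
    ∀ T : ℕ,
      pexp (marg f (fun _ => ηc) (fun _ => n) (fun _ => 1) x0 T)
          (fun x => avg n d f x - avg n d f xstar)
        ≤ (5 * L / (μ * γ * (n : ℝ) ^ ((1 : ℝ) / 3) + 5 * L)) ^ T *
            (avg n d f x0 - avg n d f xstar) := by
  intro T
  have hn : 0 < n := by omega
  have hnR : (0:ℝ) < (n:ℝ) := Nat.cast_pos.2 hn
  have hrp : 0 < (n:ℝ) ^ ((1:ℝ)/3) := Real.rpow_pos_of_pos hnR _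
  set φ : Vec d → ℝ := fun y => avg n d f y - avg n d f xstar with hφdef
  set cf : ℝ := 5 * L / (μ * γ * (n : ℝ) ^ ((1 : ℝ) / 3) + 5 * L) with hcfdef
  have hcf0 : 0 ≤ cf := by rw [hcfdef]; positivity
  have hφ0 : ∀ y, 0 ≤ φ y := fun y => sub_nonneg.2 (hmin y)
  have hΨ : ∀ S : ℕ, auxPsi (marg f (fun _ => ηc) (fun _ => n) (fun _ => 1) x0 S) φ
      ≤ ENNReal.ofReal cf ^ S * ENNReal.ofReal (φ x0) := by
    intro S
    induction S with
    | zero =>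
        rw [show marg f (fun _ => ηc) (fun _ => n) (fun _ => 1) x0 0 = PMF.pure x0 from rfl,
          auxPsi_pure, pow_zero, one_mul]
    | succ S ih =>
        rw [show marg f (fun _ => ηc) (fun _ => n) (fun _ => 1) x0 (S + 1)
            = (marg f (fun _ => ηc) (fun _ => n) (fun _ => 1) x0 S).bind (epoch f ηc n 1)
          from rfl]
        rw [auxPsi_bind]
        calc ∑' y, (marg f (fun _ => ηc) (fun _ => n) (fun _ => 1) x0 S) y
              * auxPsi (epoch f ηc n 1 y) φ
            ≤ ∑' y, (marg f (fun _ => ηc) (fun _ => n) (fun _ => 1) x0 S) y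
              * (ENNReal.ofReal cf * ENNReal.ofReal (φ y)) := by
              apply ENNReal.tsum_le_tsum
              intro y
              apply mul_le_mul_right
              calc auxPsi (epoch f ηc n 1 y) φ ≤ ENNReal.ofReal (cf * φ y) :=
                    aux_epoch_bound d n f L γ μ hL hμ hn8 hdiff hlip xstar hmin hPL ηc hγ
                      hγ13 hstep y
                _ = ENNReal.ofReal cf * ENNReal.ofReal (φ y) := ENNReal.ofReal_mul hcf0
          _ = ENNReal.ofReal cf * ∑' y, (marg f (fun _ => ηc) (fun _ => n) (fun _ => 1) x0 S) y
              * ENNReal.ofReal (φ y) := by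
              rw [← ENNReal.tsum_mul_left]
              exact tsum_congr fun y => by ring
          _ ≤ ENNReal.ofReal cf * (ENNReal.ofReal cf ^ S * ENNReal.ofReal (φ x0)) :=
              mul_le_mul_right ih _
          _ = ENNReal.ofReal cf ^ (S + 1) * ENNReal.ofReal (φ x0) := by
              rw [pow_succ]
              ring
  have hC0 : 0 ≤ cf ^ T * (avg n d f x0 - avg n d f xstar) :=
    mul_nonneg (pow_nonneg hcf0 T) (hφ0 x0)
  apply aux_pexp_le_of_auxPsi _ φ hφ0 _ hC0
  rw [ENNReal.ofReal_mul (pow_nonneg hcf0 T), ENNReal.ofReal_pow hcf0]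
  exact hΨ T

end SCSG
end
end

section
/- A threshold for the function (1 + log x)/x^η (Lemma, Appendix A). Fix η > 1 and z > 0. Define g_η(x) = (1 + log x)/x^η for x > 0 and x(z) = z^{−1/η} · ( max{ (2/η) log(1/z), 2 } )^{1/(η−1)}. Then g_η(x) ≤ z for all x ≥ x(z). -/
/-- **A threshold for the function `(1 + log x)/x^η` (Appendix A).**
Fix `η > 1` and `z > 0`, and let
`x(z) = z^{−1/η}·(max{(2/η) log(1/z), 2})^{1/(η−1)}`.  Then
`(1 + log x)/x^η ≤ z` for all `x ≥ x(z)`. -/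
theorem log_threshold (η z x : ℝ) (hη : 1 < η) (hz : 0 < z)
    (hx : z ^ (-(1 / η)) * (max ((2 / η) * Real.log (1 / z)) 2) ^ (1 / (η - 1)) ≤ x) :
    (1 + Real.log x) / x ^ η ≤ z := by
  have hη0 : (0:ℝ) < η := by linarith
  have hη1 : (0:ℝ) < η - 1 := by linarith
  set A : ℝ := max ((2 / η) * Real.log (1 / z)) 2 with hAdef
  have hA2 : (2:ℝ) ≤ A := le_max_right _ _
  have hA0 : (0:ℝ) < A := by linarith
  set B : ℝ := z ^ (-(1 / η)) * A ^ (1 / (η - 1)) with hBdef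
  have hB0 : 0 < B := mul_pos (Real.rpow_pos_of_pos hz _) (Real.rpow_pos_of_pos hA0 _)
  have hx0 : 0 < x := lt_of_lt_of_le hB0 hx
  -- `z * B^η = A^(η/(η-1))`
  have hBη : z * B ^ η = A ^ (η / (η - 1)) := by
    rw [hBdef, Real.mul_rpow (Real.rpow_pos_of_pos hz _).le (Real.rpow_pos_of_pos hA0 _).le,
      ← Real.rpow_mul hz.le, ← Real.rpow_mul hA0.le]
    have h1 : -(1 / η) * η = -1 := by field_simp
    have h2 : 1 / (η - 1) * η = η / (η - 1) := by field_simp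
    rw [h1, h2, Real.rpow_neg_one]
    field_simp
  have hAd1 : (1:ℝ) ≤ A ^ (1 / (η - 1)) :=
    Real.one_le_rpow (by linarith) (by positivity)
  -- `A^(η/(η-1)) = A * A^(1/(η-1))`
  have hsplit : A ^ (η / (η - 1)) = A * A ^ (1 / (η - 1)) := by
    have : η / (η - 1) = 1 + 1 / (η - 1) := by field_simp; ring
    rw [this, Real.rpow_add hA0, Real.rpow_one]
  -- key: `1 + log B ≤ z * B^η`
  have hkey : 1 + Real.log B ≤ z * B ^ η := by
    have hlogB : Real.log B = (1 / η) * Real.log (1 / z) + (1 / (η - 1)) * Real.log A := by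
      rw [hBdef, Real.log_mul (Real.rpow_pos_of_pos hz _).ne' (Real.rpow_pos_of_pos hA0 _).ne',
        Real.log_rpow hz, Real.log_rpow hA0, Real.log_div one_ne_zero hz.ne']
      simp [Real.log_one]
    have h1 : (1 / η) * Real.log (1 / z) ≤ A / 2 := by
      have h := le_max_left ((2 / η) * Real.log (1 / z)) 2
      have heq : (1 / η) * Real.log (1 / z) = ((2 / η) * Real.log (1 / z)) / 2 := by ring
      linarith
    have h2 : (1 / (η - 1)) * Real.log A ≤ A ^ (1 / (η - 1)) - 1 := by
      have := Real.log_le_sub_one_of_pos (Real.rpow_pos_of_pos hA0 (1 / (η - 1)))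
      rwa [Real.log_rpow hA0] at this
    rw [hBη, hsplit]
    nlinarith [hAd1, hA2]
  have hzB1 : (1:ℝ) ≤ z * B ^ η := by
    rw [hBη, hsplit]; nlinarith [hAd1, hA2]
  -- now handle general `x ≥ B`
  set s : ℝ := x / B with hsdef
  have hs1 : (1:ℝ) ≤ s := (one_le_div hB0).mpr hx
  have hs0 : (0:ℝ) < s := by linarith
  have hxBs : x = B * s := by rw [hsdef]; field_simp [hB0.ne']
  have hxη : x ^ η = B ^ η * s ^ η := by
    rw [hxBs, Real.mul_rpow hB0.le hs0.le]
  have hlogx : Real.log x = Real.log B + Real.log s := by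
    rw [hxBs, Real.log_mul hB0.ne' hs0.ne']
  have hsη : s ≤ s ^ η := by
    calc s = s ^ (1:ℝ) := (Real.rpow_one s).symm
    _ ≤ s ^ η := Real.rpow_le_rpow_of_exponent_le hs1 hη.le
  have hlogs : Real.log s ≤ s ^ η - 1 := by
    have := Real.log_le_sub_one_of_pos hs0
    linarith
  have hxη0 : 0 < x ^ η := Real.rpow_pos_of_pos hx0 _
  rw [div_le_iff₀ hxη0, hxη]
  have hBη0 : 0 < B ^ η := Real.rpow_pos_of_pos hB0 _
  have : 1 + Real.log x ≤ z * B ^ η + z * B ^ η * (s ^ η - 1) := by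
    rw [hlogx]
    have : Real.log s ≤ z * B ^ η * (s ^ η - 1) := by
      nlinarith [hzB1, hlogs, hsη]
    linarith
  nlinarith [this]
end

section
/- Second-moment bound for the SVRG-type stochastic direction (Lemma, Appendix B). Suppose each ∇f_i is L-Lipschitz (Assumption A1). Fix vectors x, x0, e ∈ ℝ^d and an integer 1 ≤ b ≤ n, and let Ĩ be a uniformly random subset of {1,…,n} of size b. Define ν = ∇f_Ĩ(x) − ∇f_Ĩ(x0) + ∇f(x0) + e. Then E‖ν‖² ≤ (L²/b)·‖x − x0‖² + 2‖∇f(x)‖² + 2‖e‖². -/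
open scoped BigOperators ENNReal

noncomputable section

namespace SCSG

variable {n d : ℕ}

section HelperLemmas
open Finset

lemma count1 {n b : ℕ} (hb : 1 ≤ b) (i : Fin n) :
    ((Finset.powersetCard b (univ : Finset (Fin n))).filter (fun J => i ∈ J)).card
      = (n-1).choose (b-1) := by
  have hc : ((univ : Finset (Fin n)).erase i).card = n - 1 := by
    rw [Finset.card_erase_of_mem (Finset.mem_univ i), Finset.card_univ, Fintype.card_fin]
  rw [← hc, ← Finset.card_powersetCard (b-1) ((univ : Finset (Fin n)).erase i)]
  apply Finset.card_bij' (fun J _ => J.erase i) (fun K _ => insert i K)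
  · intro J hJ
    simp only [mem_filter] at hJ
    exact Finset.insert_erase hJ.2
  · intro K hK
    simp only [mem_powersetCard] at hK
    have hi : i ∉ K := fun h => (Finset.mem_erase.mp (hK.1 h)).1 rfl
    exact Finset.erase_insert hi
  · intro J hJ
    simp only [mem_filter, mem_powersetCard] at hJ
    simp only [mem_powersetCard]
    exact ⟨Finset.erase_subset_erase i hJ.1.1, by rw [Finset.card_erase_of_mem hJ.2, hJ.1.2]⟩
  · intro K hK
    simp only [mem_powersetCard] at hK
    have hi : i ∉ K := fun h => (Finset.mem_erase.mp (hK.1 h)).1 rfl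
    refine Finset.mem_filter.mpr ⟨Finset.mem_powersetCard.mpr ⟨Finset.subset_univ _, ?_⟩,
      Finset.mem_insert_self _ _⟩
    rw [Finset.card_insert_of_notMem hi, hK.2]
    omega

lemma count2 {n b : ℕ} (hb : 2 ≤ b) {i j : Fin n} (hij : i ≠ j) :
    ((Finset.powersetCard b (univ : Finset (Fin n))).filter (fun J => i ∈ J ∧ j ∈ J)).card
      = (n-2).choose (b-2) := by
  have hc : (((univ : Finset (Fin n)).erase i).erase j).card = n - 2 := by
    rw [Finset.card_erase_of_mem (Finset.mem_erase.mpr ⟨hij.symm, Finset.mem_univ j⟩),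
      Finset.card_erase_of_mem (Finset.mem_univ i), Finset.card_univ, Fintype.card_fin]
    omega
  rw [← hc, ← Finset.card_powersetCard (b-2) (((univ : Finset (Fin n)).erase i).erase j)]
  apply Finset.card_bij' (fun J _ => (J.erase i).erase j) (fun K _ => insert i (insert j K))
  · intro J hJ
    simp only [mem_filter] at hJ
    rw [Finset.insert_erase (Finset.mem_erase.mpr ⟨hij.symm, hJ.2.2⟩),
      Finset.insert_erase hJ.2.1]
  · intro K hK
    simp only [mem_powersetCard] at hK
    have hiK : i ∉ K := fun h => by
      have := hK.1 h; rw [Finset.mem_erase, Finset.mem_erase] at this; exact this.2.1 rfl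
    have hjK : j ∉ K := fun h => by
      have := hK.1 h; rw [Finset.mem_erase] at this; exact this.1 rfl
    rw [Finset.erase_insert (by simp [hiK, hij])]
    exact Finset.erase_insert hjK
  · intro J hJ
    simp only [mem_filter, mem_powersetCard] at hJ
    simp only [mem_powersetCard]
    refine ⟨Finset.erase_subset_erase j (Finset.erase_subset_erase i hJ.1.1), ?_⟩
    rw [Finset.card_erase_of_mem (Finset.mem_erase.mpr ⟨hij.symm, hJ.2.2⟩),
      Finset.card_erase_of_mem hJ.2.1, hJ.1.2]
    omega
  · intro K hK
    simp only [mem_powersetCard] at hK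
    have hiK : i ∉ K := fun h => by
      have := hK.1 h; rw [Finset.mem_erase, Finset.mem_erase] at this; exact this.2.1 rfl
    have hjK : j ∉ K := fun h => by
      have := hK.1 h; rw [Finset.mem_erase] at this; exact this.1 rfl
    refine Finset.mem_filter.mpr ⟨Finset.mem_powersetCard.mpr ⟨Finset.subset_univ _, ?_⟩,
      Finset.mem_insert_self _ _, Finset.mem_insert_of_mem (Finset.mem_insert_self _ _)⟩
    rw [Finset.card_insert_of_notMem (by simp [hiK, hij]),
      Finset.card_insert_of_notMem hjK, hK.2]
    omega

lemma sumL1 {n b : ℕ} (hb : 1 ≤ b) {V : Type*} [AddCommMonoid V] (w : Fin n → V) :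
    ∑ J ∈ Finset.powersetCard b (univ : Finset (Fin n)), ∑ i ∈ J, w i
      = ((n-1).choose (b-1)) • ∑ i, w i := by
  have : ∀ J ∈ Finset.powersetCard b (univ : Finset (Fin n)),
      ∑ i ∈ J, w i = ∑ i : Fin n, if i ∈ J then w i else 0 := by
    intro J _
    rw [Finset.sum_ite_mem]
    congr 1
    simp
  rw [Finset.sum_congr rfl this, Finset.sum_comm]
  rw [Finset.smul_sum]
  refine Finset.sum_congr rfl fun i _ => ?_
  rw [← Finset.sum_filter, Finset.sum_const, count1 hb i]

lemma sumL2 {n b : ℕ} (hb : 2 ≤ b) (s : Fin n → Fin n → ℝ) :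
    ∑ J ∈ Finset.powersetCard b (univ : Finset (Fin n)), ∑ i ∈ J, ∑ j ∈ J, s i j
      = ∑ i : Fin n, ∑ j : Fin n,
          (if i = j then ((n-1).choose (b-1) : ℝ) else ((n-2).choose (b-2) : ℝ)) * s i j := by
  have h1 : ∀ (J : Finset (Fin n)) (t : Fin n → ℝ),
      ∑ i ∈ J, t i = ∑ i : Fin n, if i ∈ J then t i else 0 := by
    intro J t
    rw [Finset.sum_ite_mem]
    congr 1
    simp
  have key : ∀ J ∈ Finset.powersetCard b (univ : Finset (Fin n)),
      ∑ i ∈ J, ∑ j ∈ J, s i j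
        = ∑ i : Fin n, ∑ j : Fin n, if i ∈ J ∧ j ∈ J then s i j else 0 := by
    intro J _
    rw [h1 J]
    refine Finset.sum_congr rfl fun i _ => ?_
    by_cases hiJ : i ∈ J
    · simp only [hiJ, if_true, true_and]
      exact h1 J _
    · simp [hiJ]
  rw [Finset.sum_congr rfl key, Finset.sum_comm]
  refine Finset.sum_congr rfl fun i _ => ?_
  rw [Finset.sum_comm]
  refine Finset.sum_congr rfl fun j _ => ?_
  rw [← Finset.sum_filter, Finset.sum_const, nsmul_eq_mul]
  congr 1
  by_cases hij : i = j
  · subst hij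
    simp only [if_true]
    have : Finset.filter (fun a => i ∈ a ∧ i ∈ a) (Finset.powersetCard b (univ : Finset (Fin n)))
        = Finset.filter (fun a => i ∈ a) (Finset.powersetCard b univ) :=
      Finset.filter_congr (fun J _ => by tauto)
    rw [this, count1 (by omega) i]
  · simp only [hij, if_false]
    rw [count2 hb hij]

lemma core {V : Type*} [NormedAddCommGroup V] [InnerProductSpace ℝ V]
    {n b : ℕ} (hb : 1 ≤ b) (hbn : b ≤ n) (u : Fin n → V) :
    ∑ J ∈ Finset.powersetCard b (univ : Finset (Fin n)), ‖(b:ℝ)⁻¹ • ∑ i ∈ J, u i‖^2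
      ≤ (n.choose b : ℝ) * (((b:ℝ)*(n:ℝ))⁻¹ * ∑ i, ‖u i - (n:ℝ)⁻¹ • ∑ k, u k‖^2
          + ‖(n:ℝ)⁻¹ • ∑ k, u k‖^2) := by
  have hn : 1 ≤ n := le_trans hb hbn
  have hn0 : (0:ℝ) < n := by exact_mod_cast hn
  have hb0 : (0:ℝ) < b := by exact_mod_cast hb
  set ub : V := (n:ℝ)⁻¹ • ∑ k, u k with hub
  set S : ℝ := ∑ i, ‖u i‖^2 with hS
  set M : ℝ := ‖ub‖^2 with hM
  have hsum : ∑ k, u k = (n:ℝ) • ub := by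
    rw [hub, smul_inv_smul₀ hn0.ne']
  have hA : ∑ i, ‖u i - ub‖^2 = S - n*M := by
    have : ∀ i : Fin n, ‖u i - ub‖^2 = ‖u i‖^2 - 2 * inner ℝ (u i) ub + ‖ub‖^2 := fun i =>
      norm_sub_sq_real (u i) ub
    rw [Finset.sum_congr rfl (fun i _ => this i), Finset.sum_add_distrib,
      Finset.sum_sub_distrib, Finset.sum_const, ← Finset.mul_sum, ← sum_inner, hsum,
      real_inner_smul_left, real_inner_self_eq_norm_sq]
    simp only [card_univ, Fintype.card_fin, nsmul_eq_mul]
    rw [← hS, ← hM]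
    ring
  have hSM : n*M ≤ S := by
    have := hA ▸ Finset.sum_nonneg (fun i _ => sq_nonneg ‖u i - ub‖)
    linarith
  have hM0 : 0 ≤ M := sq_nonneg _
  have hnorm : ∀ J : Finset (Fin n), J ∈ Finset.powersetCard b (univ : Finset (Fin n)) →
      ‖(b:ℝ)⁻¹ • ∑ i ∈ J, u i‖^2 = (b:ℝ)⁻¹^2 * ∑ i ∈ J, ∑ j ∈ J, (inner ℝ (u i) (u j) : ℝ) := by
    intro J _
    rw [norm_smul, Real.norm_eq_abs, abs_of_nonneg (inv_nonneg.mpr hb0.le), mul_pow]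
    congr 1
    rw [← real_inner_self_eq_norm_sq]
    simp only [sum_inner, inner_sum]
    exact Finset.sum_comm
  rw [Finset.sum_congr rfl hnorm, ← Finset.mul_sum]
  rcases eq_or_lt_of_le hb with hb1 | hb2
  · -- b = 1
    have hb1' : b = 1 := hb1.symm
    subst hb1'
    rw [Finset.powersetCard_one, Finset.sum_map]
    simp only [Function.Embedding.coeFn_mk, Finset.sum_singleton,
      real_inner_self_eq_norm_sq]
    rw [← hS]
    have h1 : (n.choose 1 : ℝ) = n := by rw [Nat.choose_one_right]
    rw [h1, hA]
    have h2 : ((1:ℕ):ℝ)⁻¹^2 = 1 := by norm_num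
    rw [h2, one_mul]
    have : (n:ℝ) * (((1:ℕ):ℝ)*(n:ℝ))⁻¹ = 1 := by
      rw [Nat.cast_one, one_mul, mul_inv_cancel₀ hn0.ne']
    rw [mul_add, ← mul_assoc, this, one_mul]
    linarith
  · -- 2 ≤ b, hence 2 ≤ n
    have hb2' : 2 ≤ b := hb2
    have hn2 : 2 ≤ n := le_trans hb2 hbn
    have hn1 : (0:ℝ) < (n:ℝ) - 1 := by
      have : (2:ℝ) ≤ n := by exact_mod_cast hn2
      linarith
    set c1 : ℝ := ((n-1).choose (b-1) : ℝ) with hc1def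
    set c2 : ℝ := ((n-2).choose (b-2) : ℝ) with hc2def
    set C : ℝ := (n.choose b : ℝ) with hCdef
    have hQ : ∑ i : Fin n, ∑ j : Fin n, (inner ℝ (u i) (u j) : ℝ) = (n:ℝ)^2 * M := by
      have h : ∑ i : Fin n, ∑ j : Fin n, (inner ℝ (u i) (u j) : ℝ)
          = (inner ℝ (∑ i, u i) (∑ j, u j) : ℝ) := by
        simp only [sum_inner, inner_sum]
        exact Finset.sum_comm
      rw [h, hsum, real_inner_smul_left, real_inner_smul_right,
        real_inner_self_eq_norm_sq, ← hM]
      ring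
    have hsplit : ∑ J ∈ Finset.powersetCard b (univ : Finset (Fin n)),
        ∑ i ∈ J, ∑ j ∈ J, (inner ℝ (u i) (u j) : ℝ) = (c1 - c2) * S + c2 * ((n:ℝ)^2 * M) := by
      rw [sumL2 hb2' (fun i j => (inner ℝ (u i) (u j) : ℝ))]
      have ptw : ∀ i j : Fin n,
          (if i = j then c1 else c2) * (inner ℝ (u i) (u j) : ℝ)
            = c2 * (inner ℝ (u i) (u j) : ℝ)
              + (if i = j then (c1 - c2) * (inner ℝ (u i) (u j) : ℝ) else 0) := by
        intro i j; split_ifs <;> ring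
      simp only [← hc1def, ← hc2def, ptw]
      rw [Finset.sum_congr rfl (fun i _ => Finset.sum_add_distrib), Finset.sum_add_distrib]
      have hpart1 : ∑ x : Fin n, ∑ y : Fin n, c2 * (inner ℝ (u x) (u y) : ℝ)
          = c2 * ((n:ℝ)^2 * M) := by
        simp only [← Finset.mul_sum]
        rw [hQ]
      have hpart2 : ∑ x : Fin n,
          ∑ y : Fin n, (if x = y then (c1 - c2) * (inner ℝ (u x) (u y) : ℝ) else 0)
            = (c1 - c2) * S := by
        have hx : ∀ x : Fin n,
            ∑ y : Fin n, (if x = y then (c1 - c2) * (inner ℝ (u x) (u y) : ℝ) else 0)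
              = (c1 - c2) * ‖u x‖^2 := by
          intro x
          rw [Finset.sum_ite_eq]
          simp [real_inner_self_eq_norm_sq]
        rw [Finset.sum_congr rfl (fun x _ => hx x), ← Finset.mul_sum, ← hS]
      rw [hpart1, hpart2]
      ring
    rw [hsplit, hA]
    -- choose identities
    have hnat1 : n * (n-1).choose (b-1) = n.choose b * b := by
      have h := Nat.add_one_mul_choose_eq (n-1) (b-1)
      rwa [show n-1+1 = n by omega, show b-1+1 = b by omega] at h
    have hnat2 : (n-1) * (n-2).choose (b-2) = (n-1).choose (b-1) * (b-1) := by
      have h := Nat.add_one_mul_choose_eq (n-2) (b-2)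
      rwa [show n-2+1 = n-1 by omega, show b-2+1 = b-1 by omega] at h
    have r1 : (n:ℝ) * c1 = C * (b:ℝ) := by
      simp only [hc1def, hCdef]
      exact_mod_cast hnat1
    have r2 : ((n:ℝ)-1) * c2 = c1 * ((b:ℝ)-1) := by
      have h : ((n-1:ℕ):ℝ) * c2 = c1 * ((b-1:ℕ):ℝ) := by
        simp only [hc1def, hc2def]
        exact_mod_cast hnat2
      rwa [Nat.cast_sub (by omega), Nat.cast_sub (by omega), Nat.cast_one] at h
    have hC0 : (0:ℝ) ≤ C := Nat.cast_nonneg _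
    have hbR : (2:ℝ) ≤ (b:ℝ) := by exact_mod_cast hb2'
    have e1 : c1 = C*(b:ℝ)/(n:ℝ) := by rw [eq_div_iff hn0.ne']; linarith
    have e2 : c2 = c1*((b:ℝ)-1)/((n:ℝ)-1) := by rw [eq_div_iff hn1.ne']; linarith
    have key : ((n:ℝ)-1) * ((n:ℝ) * ((c1 - c2)*S + c2 * ((n:ℝ)^2 * M)))
          + C*(b:ℝ)*((b:ℝ)-1)*(S - (n:ℝ)*M)
        = ((n:ℝ)-1) * (C*(b:ℝ)*(S-(n:ℝ)*M) + C*(b:ℝ)^2*(n:ℝ)*M) := by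
      rw [e2, e1]
      field_simp
      ring
    have ht : 0 ≤ C*(b:ℝ)*((b:ℝ)-1)*(S-(n:ℝ)*M) := by
      apply mul_nonneg
      apply mul_nonneg
      apply mul_nonneg hC0 (by positivity)
      · linarith
      · linarith
    have hab : ((n:ℝ)-1)*((n:ℝ)*((c1 - c2)*S + c2*((n:ℝ)^2*M)))
        ≤ ((n:ℝ)-1)*(C*(b:ℝ)*(S-(n:ℝ)*M)+C*(b:ℝ)^2*(n:ℝ)*M) := by linarith
    have hD : (0:ℝ) < (b:ℝ)^2*(n:ℝ)*((n:ℝ)-1) := by positivity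
    rw [show (b:ℝ)⁻¹^2 * ((c1 - c2)*S + c2*((n:ℝ)^2*M))
        = (((n:ℝ)-1)*((n:ℝ)*((c1 - c2)*S + c2*((n:ℝ)^2*M))))/((b:ℝ)^2*(n:ℝ)*((n:ℝ)-1)) by
      field_simp]
    rw [show C*(((b:ℝ)*(n:ℝ))⁻¹*(S-(n:ℝ)*M)+M)
        = (((n:ℝ)-1)*(C*(b:ℝ)*(S-(n:ℝ)*M)+C*(b:ℝ)^2*(n:ℝ)*M))/((b:ℝ)^2*(n:ℝ)*((n:ℝ)-1)) by
      field_simp]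
    rw [div_le_div_iff₀ hD hD]
    exact mul_le_mul_of_nonneg_right hab hD.le

lemma sum_sub_mean_sq_le {V : Type*} [NormedAddCommGroup V] [InnerProductSpace ℝ V] {n : ℕ}
    (v : Fin n → V) :
    ∑ i, ‖v i - (n:ℝ)⁻¹ • ∑ k, v k‖^2 ≤ ∑ i, ‖v i‖^2 := by
  rcases Nat.eq_zero_or_pos n with h0 | hn
  · subst h0; simp
  have hn0 : (0:ℝ) < n := by exact_mod_cast hn
  set m : V := (n:ℝ)⁻¹ • ∑ k, v k with hm
  have hs : ∑ k, v k = (n:ℝ) • m := (smul_inv_smul₀ hn0.ne' _).symm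
  have hexp : ∀ i : Fin n, ‖v i - m‖^2 = ‖v i‖^2 - 2*inner ℝ (v i) m + ‖m‖^2 := fun i =>
    norm_sub_sq_real _ _
  rw [Finset.sum_congr rfl (fun i _ => hexp i), Finset.sum_add_distrib,
    Finset.sum_sub_distrib, ← Finset.mul_sum, ← sum_inner, hs, real_inner_smul_left,
    real_inner_self_eq_norm_sq, Finset.sum_const, card_univ, Fintype.card_fin, nsmul_eq_mul]
  nlinarith [mul_nonneg hn0.le (sq_nonneg ‖m‖)]

lemma grad_avg {n d : ℕ} (f : Fin n → Vec d → ℝ) (hdiff : ∀ i, Differentiable ℝ (f i))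
    (y : Vec d) :
    gradient (avg n d f) y = (n:ℝ)⁻¹ • ∑ i, gradient (f i) y := by
  have h1 : avg n d f = fun x => (n:ℝ)⁻¹ * ∑ i, f i x := by
    funext z
    simp [avg, div_eq_inv_mul]
  rw [h1, gradient]
  rw [fderiv_const_mul (DifferentiableAt.fun_sum (fun i _ => (hdiff i).differentiableAt))]
  rw [fderiv_fun_sum (fun i _ => (hdiff i).differentiableAt)]
  rw [map_smul, map_sum]
  rfl

end HelperLemmas

/-- **Second-moment bound for the SVRG-type stochastic direction (Appendix B).**
Suppose each `∇f_i` is `L`-Lipschitz. For fixed `x, x0, e` and a uniformly random size-`b`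
subset `Ĩ` of `{1,…,n}`, the direction `ν = ∇f_Ĩ(x) − ∇f_Ĩ(x0) + ∇f(x0) + e` satisfies
`E‖ν‖² ≤ (L²/b)·‖x − x0‖² + 2‖∇f(x)‖² + 2‖e‖²`. -/

theorem nu_second_moment
    (d n : ℕ) (hn : 0 < n) (f : Fin n → Vec d → ℝ) (L : ℝ)
    (hdiff : ∀ i, Differentiable ℝ (f i))
    (hlip : ∀ i (x y : Vec d), ‖gradient (f i) x - gradient (f i) y‖ ≤ L * ‖x - y‖)
    (b : ℕ) (hb : 1 ≤ b) (hbn : b ≤ n) (x x0 e : Vec d) :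
    pexp (unifSubsets n b)
        (fun J => ‖gradBatch f J x - gradBatch f J x0 + gradient (avg n d f) x0 + e‖ ^ 2)
      ≤ L ^ 2 / b * ‖x - x0‖ ^ 2 + 2 * ‖gradient (avg n d f) x‖ ^ 2 + 2 * ‖e‖ ^ 2 := by
  classical
  have hn0 : (0:ℝ) < n := by exact_mod_cast hn
  have hb0 : (0:ℝ) < b := by exact_mod_cast hb
  have hP : (Finset.powersetCard b (Finset.univ : Finset (Fin n))).Nonempty := by
    rw [Finset.powersetCard_nonempty]
    simpa using hbn
  have hcardP : (Finset.powersetCard b (Finset.univ : Finset (Fin n))).card = n.choose b := by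
    rw [Finset.card_powersetCard]; simp
  have hC0 : (0:ℝ) < (n.choose b : ℝ) := by exact_mod_cast Nat.choose_pos hbn
  set gv : Fin n → Vec d := fun i => gradient (f i) x - gradient (f i) x0 with hgv
  set cv : Vec d := gradient (avg n d f) x0 + e with hcv
  set u : Fin n → Vec d := fun i => gv i + cv with hu
  have hmean' : (n:ℝ)⁻¹ • ∑ k, u k = ((n:ℝ)⁻¹ • ∑ k, gv k) + cv := by
    simp only [hu]
    rw [Finset.sum_add_distrib, smul_add, Finset.sum_const, Finset.card_univ,
      Fintype.card_fin, ← Nat.cast_smul_eq_nsmul ℝ, smul_smul, inv_mul_cancel₀ hn0.ne',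
      one_smul]
  have hgbar : (n:ℝ)⁻¹ • ∑ k, gv k
      = gradient (avg n d f) x - gradient (avg n d f) x0 := by
    simp only [hgv]
    rw [Finset.sum_sub_distrib, smul_sub, ← grad_avg f hdiff x, ← grad_avg f hdiff x0]
  have humean : (n:ℝ)⁻¹ • ∑ k, u k = gradient (avg n d f) x + e := by
    rw [hmean', hgbar, hcv]; abel
  have hbatch : ∀ J ∈ Finset.powersetCard b (Finset.univ : Finset (Fin n)),
      gradBatch f J x - gradBatch f J x0 + gradient (avg n d f) x0 + e
        = (b:ℝ)⁻¹ • ∑ i ∈ J, u i := by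
    intro J hJ
    have hcard : J.card = b := (Finset.mem_powersetCard.mp hJ).2
    simp only [hu, hgv, gradBatch, hcard]
    rw [Finset.sum_add_distrib, Finset.sum_sub_distrib, smul_add, smul_sub,
      Finset.sum_const, hcard, ← Nat.cast_smul_eq_nsmul ℝ, smul_smul,
      inv_mul_cancel₀ hb0.ne', one_smul, hcv]
    abel
  have hpexp : pexp (unifSubsets n b)
      (fun J => ‖gradBatch f J x - gradBatch f J x0 + gradient (avg n d f) x0 + e‖ ^ 2)
      = ((n.choose b : ℝ))⁻¹ * ∑ J ∈ Finset.powersetCard b (Finset.univ : Finset (Fin n)),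
          ‖(b:ℝ)⁻¹ • ∑ i ∈ J, u i‖^2 := by
    rw [pexp, unifSubsets, dif_pos hP]
    rw [tsum_eq_sum (s := Finset.powersetCard b (Finset.univ : Finset (Fin n)))
      (fun J hJ => by rw [PMF.uniformOfFinset_apply, if_neg hJ]; simp)]
    rw [Finset.mul_sum]
    refine Finset.sum_congr rfl fun J hJ => ?_
    rw [PMF.uniformOfFinset_apply, if_pos hJ, hbatch J hJ]
    congr 1
    rw [ENNReal.toReal_inv, hcardP]
    simp
  rw [hpexp]
  have hcore := core hb hbn u
  have h1 : ((n.choose b : ℝ))⁻¹ * ∑ J ∈ Finset.powersetCard b (Finset.univ : Finset (Fin n)),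
      ‖(b:ℝ)⁻¹ • ∑ i ∈ J, u i‖^2
      ≤ ((b:ℝ)*(n:ℝ))⁻¹ * ∑ i, ‖u i - (n:ℝ)⁻¹ • ∑ k, u k‖^2
        + ‖(n:ℝ)⁻¹ • ∑ k, u k‖^2 := by
    have h2 := mul_le_mul_of_nonneg_left hcore (inv_nonneg.mpr hC0.le)
    rwa [← mul_assoc, inv_mul_cancel₀ hC0.ne', one_mul] at h2
  have t1 : ∑ i, ‖u i - (n:ℝ)⁻¹ • ∑ k, u k‖^2 ≤ (n:ℝ) * (L^2 * ‖x - x0‖^2) := by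
    have heq : ∀ i : Fin n, u i - (n:ℝ)⁻¹ • ∑ k, u k
        = gv i - (n:ℝ)⁻¹ • ∑ k, gv k := by
      intro i
      rw [hmean']
      simp only [hu]
      abel
    rw [Finset.sum_congr rfl (fun i _ => by rw [heq i])]
    refine le_trans (sum_sub_mean_sq_le gv) ?_
    have hone : ∀ i : Fin n, ‖gv i‖^2 ≤ L^2 * ‖x - x0‖^2 := by
      intro i
      have h := hlip i x x0
      have h2 : ‖gv i‖^2 ≤ (L * ‖x - x0‖)^2 := by
        apply pow_le_pow_left₀ (norm_nonneg _) h
      rwa [mul_pow] at h2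
    calc ∑ i, ‖gv i‖^2 ≤ ∑ _i : Fin n, L^2*‖x-x0‖^2 :=
          Finset.sum_le_sum (fun i _ => hone i)
      _ = (n:ℝ) * (L^2*‖x-x0‖^2) := by
          rw [Finset.sum_const, Finset.card_univ, Fintype.card_fin, nsmul_eq_mul]
  have t1' : ((b:ℝ)*(n:ℝ))⁻¹ * ∑ i, ‖u i - (n:ℝ)⁻¹ • ∑ k, u k‖^2
      ≤ L^2/b * ‖x-x0‖^2 := by
    refine le_trans (mul_le_mul_of_nonneg_left t1 (by positivity)) (le_of_eq ?_)
    field_simp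
  have t2 : ‖(n:ℝ)⁻¹ • ∑ k, u k‖^2
      ≤ 2*‖gradient (avg n d f) x‖^2 + 2*‖e‖^2 := by
    rw [humean]
    have h3 := norm_add_le (gradient (avg n d f) x) e
    nlinarith [norm_nonneg (gradient (avg n d f) x), norm_nonneg e,
      sq_nonneg (‖gradient (avg n d f) x‖ - ‖e‖), norm_nonneg (gradient (avg n d f) x + e)]
  linarith


end SCSG
end
end
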